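/- arXiv:1711.04206 — 5 statements merged into one kernel-verified Lean document; each statement's English description precedes it below -/
import Mathlib

section
/- Let m ≥ 1 and R = K[x1,x2,x3,x4]/(x1², x2², x3², x4^{m+1}, x1x2, x1x3, x2x4^m, x3x4^m, x2x3 − x1x4). Then the images of the monomials 1, x1, and x4^{ℓ+1}, x1·x4^{ℓ+1}, x2·x4^ℓ, x3·x4^ℓ for 0 ≤ ℓ ≤ m−1 form a K-vector space basis of R. -/
open MvPolynomial Finsupp

noncomputable def relIdeal (K : Type*) [Field K] (m : ℕ) :
    Ideal (MvPolynomial (Fin 4) K) :=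
  Ideal.span {X 0 ^ 2, X 1 ^ 2, X 2 ^ 2, X 3 ^ (m + 1), X 0 * X 1, X 0 * X 2,
    X 1 * X 3 ^ m, X 2 * X 3 ^ m, X 1 * X 2 - X 0 * X 3}

noncomputable def E4 (a b c d : ℕ) : Fin 4 →₀ ℕ :=
  Finsupp.single 0 a + Finsupp.single 1 b + Finsupp.single 2 c + Finsupp.single 3 d

lemma E4_apply (a b c d : ℕ) (k : Fin 4) :
    E4 a b c d k = ![a, b, c, d] k := by
  fin_cases k <;> simp [E4, Finsupp.single_apply]

lemma E4_inj {a b c d a' b' c' d' : ℕ} :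
    E4 a b c d = E4 a' b' c' d' ↔ a = a' ∧ b = b' ∧ c = c' ∧ d = d' := by
  constructor
  · intro h
    have h0 := DFunLike.congr_fun h 0
    have h1 := DFunLike.congr_fun h 1
    have h2 := DFunLike.congr_fun h 2
    have h3 := DFunLike.congr_fun h 3
    simp [E4_apply] at h0 h1 h2 h3
    exact ⟨h0, h1, h2, h3⟩
  · rintro ⟨rfl, rfl, rfl, rfl⟩; rfl

lemma mon_E4 {K : Type*} [CommSemiring K] (a b c d : ℕ) :
    (X 0 ^ a * X 1 ^ b * X 2 ^ c * X 3 ^ d : MvPolynomial (Fin 4) K)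
      = monomial (E4 a b c d) 1 := by
  simp [E4, X_pow_eq_monomial, monomial_mul]

lemma E4_add (a b c d a' b' c' d' : ℕ) :
    E4 a b c d + E4 a' b' c' d' = E4 (a+a') (b+b') (c+c') (d+d') := by
  ext k; fin_cases k <;> simp [E4_apply]

lemma eq_E4 (u : Fin 4 →₀ ℕ) : u = E4 (u 0) (u 1) (u 2) (u 3) := by
  ext k; fin_cases k <;> simp [E4_apply]

noncomputable def wt (K : Type*) [Field K] (m : ℕ) (i : Fin 2 ⊕ Fin m × Fin 4) :
    MvPolynomial (Fin 4) K →ₗ[K] K :=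
  Sum.elim
    ![lcoeff K (E4 0 0 0 0), lcoeff K (E4 1 0 0 0)]
    (fun p => ![lcoeff K (E4 0 0 0 (p.1+1)),
      lcoeff K (E4 1 0 0 (p.1+1)) + lcoeff K (E4 0 1 1 p.1),
      lcoeff K (E4 0 1 0 p.1), lcoeff K (E4 0 0 1 p.1)] p.2) i


lemma wt_vanish {K : Type*} [Field K] {m : ℕ} (hm : 1 ≤ m) {p : MvPolynomial (Fin 4) K}
    (hp : p ∈ relIdeal K m) (i : Fin 2 ⊕ Fin m × Fin 4) : wt K m i p = 0 := by
  have e1 : (X 0 ^ 2 : MvPolynomial (Fin 4) K) = monomial (E4 2 0 0 0) 1 := by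
    rw [← mon_E4]; ring
  have e2 : (X 1 ^ 2 : MvPolynomial (Fin 4) K) = monomial (E4 0 2 0 0) 1 := by
    rw [← mon_E4]; ring
  have e3 : (X 2 ^ 2 : MvPolynomial (Fin 4) K) = monomial (E4 0 0 2 0) 1 := by
    rw [← mon_E4]; ring
  have e4 : (X 3 ^ (m + 1) : MvPolynomial (Fin 4) K) = monomial (E4 0 0 0 (m+1)) 1 := by
    rw [← mon_E4]; ring
  have e5 : (X 0 * X 1 : MvPolynomial (Fin 4) K) = monomial (E4 1 1 0 0) 1 := by
    rw [← mon_E4]; ring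
  have e6 : (X 0 * X 2 : MvPolynomial (Fin 4) K) = monomial (E4 1 0 1 0) 1 := by
    rw [← mon_E4]; ring
  have e7 : (X 1 * X 3 ^ m : MvPolynomial (Fin 4) K) = monomial (E4 0 1 0 m) 1 := by
    rw [← mon_E4]; ring
  have e8 : (X 2 * X 3 ^ m : MvPolynomial (Fin 4) K) = monomial (E4 0 0 1 m) 1 := by
    rw [← mon_E4]; ring
  have e9 : (X 1 * X 2 : MvPolynomial (Fin 4) K) = monomial (E4 0 1 1 0) 1 := by
    rw [← mon_E4]; ring
  have e10 : (X 0 * X 3 : MvPolynomial (Fin 4) K) = monomial (E4 1 0 0 1) 1 := by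
    rw [← mon_E4]; ring
  suffices h : ∀ r : MvPolynomial (Fin 4) K, wt K m i (r * p) = 0 by
    simpa using h 1
  refine Submodule.span_induction ?_ ?_ ?_ ?_ hp
  · -- generators
    intro g hg r
    induction r using MvPolynomial.induction_on' with
    | add p q hp hq => rw [add_mul, map_add, hp, hq, add_zero]
    | monomial u a =>
      obtain ⟨u0, u1, u2, u3, rfl⟩ : ∃ a b c d, u = E4 a b c d :=
        ⟨_, _, _, _, eq_E4 u⟩
      simp only [Set.mem_insert_iff, Set.mem_singleton_iff] at hg
      have hl : ∀ l : Fin m, (l : ℕ) < m := fun l => l.2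
      rcases hg with rfl|rfl|rfl|rfl|rfl|rfl|rfl|rfl|rfl <;>
        simp only [e1, e2, e3, e4, e5, e6, e7, e8, e9, e10, mul_sub, map_sub,
          monomial_mul, E4_add, mul_one] <;>
      rcases i with i | ⟨l, k⟩ <;> (try have hl2 : (l : ℕ) < m := l.2) <;>
        (try fin_cases i) <;> (try fin_cases k) <;>
        simp [wt, lcoeff_apply, coeff_monomial, E4_inj] <;>
        first
          | rfl
          | (intros; exfalso; omega)
          | (split_ifs <;> first | ring1 | rfl | (exfalso; omega))

  · intro r; simp
  · intro x y _ _ hx hy r; rw [mul_add, map_add, hx, hy, add_zero]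
  · intro a x _ hx r; rw [smul_eq_mul, ← mul_assoc, hx]

noncomputable def vp (K : Type*) [Field K] (m : ℕ) : Fin 2 ⊕ Fin m × Fin 4 → MvPolynomial (Fin 4) K :=
  Sum.elim ![1, X 0]
    (fun p => ![X 3 ^ ((p.1 : ℕ) + 1), X 0 * X 3 ^ ((p.1 : ℕ) + 1),
      X 1 * X 3 ^ (p.1 : ℕ), X 2 * X 3 ^ (p.1 : ℕ)] p.2)

lemma vp_mon {K : Type*} [Field K] (m : ℕ) (j : Fin 2 ⊕ Fin m × Fin 4) :
    vp K m j = Sum.elim ![monomial (E4 0 0 0 0) 1, monomial (E4 1 0 0 0) 1]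
      (fun p => ![monomial (E4 0 0 0 ((p.1:ℕ)+1)) 1, monomial (E4 1 0 0 ((p.1:ℕ)+1)) 1,
        monomial (E4 0 1 0 (p.1:ℕ)) 1, monomial (E4 0 0 1 (p.1:ℕ)) 1] p.2) j := by
  rcases j with j | ⟨l, k⟩ <;> (try fin_cases j) <;> (try fin_cases k) <;>
    simp [vp] <;> rw [← mon_E4] <;> ring

lemma wt_delta {K : Type*} [Field K] {m : ℕ} (i j : Fin 2 ⊕ Fin m × Fin 4) :
    wt K m i (vp K m j) = if j = i then 1 else 0 := by
  rw [vp_mon]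
  rcases i with i | ⟨l, k⟩ <;> rcases j with j | ⟨l', k'⟩ <;>
    (try fin_cases i) <;> (try fin_cases j) <;> (try fin_cases k) <;> (try fin_cases k') <;>
    simp [wt, lcoeff_apply, coeff_monomial, E4_inj, Fin.ext_iff] <;>
    split_ifs <;> first | ring1 | rfl | (exfalso; omega) | omega

set_option maxHeartbeats 2000000 in
set_option synthInstance.maxHeartbeats 80000 in
/-- The images of `1, x1, x4^{ℓ+1}, x1x4^{ℓ+1}, x2x4^ℓ, x3x4^ℓ` (`0 ≤ ℓ ≤ m-1`)
form a `K`-basis of the quotient ring. -/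
theorem stmt1 (K : Type*) [Field K] [CharZero K] (m : ℕ) (hm : 1 ≤ m) :
    let π := Ideal.Quotient.mk (relIdeal K m)
    let v : Fin 2 ⊕ (Fin m × Fin 4) → MvPolynomial (Fin 4) K ⧸ relIdeal K m :=
      Sum.elim ![π 1, π (X 0)]
        (fun p => ![π (X 3 ^ ((p.1 : ℕ) + 1)), π (X 0 * X 3 ^ ((p.1 : ℕ) + 1)),
          π (X 1 * X 3 ^ (p.1 : ℕ)), π (X 2 * X 3 ^ (p.1 : ℕ))] p.2)
    LinearIndependent K v ∧ Submodule.span K (Set.range v) = ⊤ := by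
  intro π v
  have hv : ∀ j, v j = π (vp K m j) := by
    rintro (j | ⟨l, k⟩) <;> (try fin_cases j) <;> (try fin_cases k) <;>
      simp [v, vp, π]
  constructor
  · rw [Fintype.linearIndependent_iff]
    intro g hg i
    have hsum : (Finset.univ.sum fun j => g j • vp K m j) ∈ relIdeal K m := by
      rw [← Ideal.Quotient.eq_zero_iff_mem]
      have : Ideal.Quotient.mk (relIdeal K m) (Finset.univ.sum fun j => g j • vp K m j)
          = Ideal.Quotient.mkₐ K (relIdeal K m) (Finset.univ.sum fun j => g j • vp K m j) := rfl
      rw [this, map_sum]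
      simp only [map_smul]
      rw [← hg]
      congr 1
      ext j
      rw [hv j]
      rfl
    have h0 := wt_vanish hm hsum i
    rw [map_sum] at h0
    simp only [map_smul, wt_delta, smul_eq_mul, mul_ite, mul_one, mul_zero] at h0
    rwa [Finset.sum_ite_eq' Finset.univ i g, if_pos (Finset.mem_univ i)] at h0
  · rw [eq_top_iff]
    rintro x -
    obtain ⟨p, rfl⟩ := Ideal.Quotient.mk_surjective x
    have hzero : ∀ q : MvPolynomial (Fin 4) K, q ∈ relIdeal K m → π q = 0 := fun q h =>
      Ideal.Quotient.eq_zero_iff_mem.mpr h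
    have hgen : ∀ q ∈ ({X 0 ^ 2, X 1 ^ 2, X 2 ^ 2, X 3 ^ (m + 1), X 0 * X 1, X 0 * X 2,
        X 1 * X 3 ^ m, X 2 * X 3 ^ m, X 1 * X 2 - X 0 * X 3} : Set (MvPolynomial (Fin 4) K)),
        q ∈ relIdeal K m := fun q hq => Ideal.subset_span hq
    have mg1 : (X 0 ^ 2 : MvPolynomial (Fin 4) K) ∈ relIdeal K m := hgen _ (Set.mem_insert _ _)
    have mg2 : (X 1 ^ 2 : MvPolynomial (Fin 4) K) ∈ relIdeal K m := hgen _ (Set.mem_insert_of_mem _ (Set.mem_insert _ _))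
    have mg3 : (X 2 ^ 2 : MvPolynomial (Fin 4) K) ∈ relIdeal K m := hgen _ (Set.mem_insert_of_mem _ (Set.mem_insert_of_mem _ (Set.mem_insert _ _)))
    have mg4 : (X 3 ^ (m + 1) : MvPolynomial (Fin 4) K) ∈ relIdeal K m := hgen _ (Set.mem_insert_of_mem _ (Set.mem_insert_of_mem _ (Set.mem_insert_of_mem _ (Set.mem_insert _ _))))
    have mg5 : (X 0 * X 1 : MvPolynomial (Fin 4) K) ∈ relIdeal K m := hgen _ (Set.mem_insert_of_mem _ (Set.mem_insert_of_mem _ (Set.mem_insert_of_mem _ (Set.mem_insert_of_mem _ (Set.mem_insert _ _)))))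
    have mg6 : (X 0 * X 2 : MvPolynomial (Fin 4) K) ∈ relIdeal K m := hgen _ (Set.mem_insert_of_mem _ (Set.mem_insert_of_mem _ (Set.mem_insert_of_mem _ (Set.mem_insert_of_mem _ (Set.mem_insert_of_mem _ (Set.mem_insert _ _))))))
    have mg7 : (X 1 * X 3 ^ m : MvPolynomial (Fin 4) K) ∈ relIdeal K m := hgen _ (Set.mem_insert_of_mem _ (Set.mem_insert_of_mem _ (Set.mem_insert_of_mem _ (Set.mem_insert_of_mem _ (Set.mem_insert_of_mem _ (Set.mem_insert_of_mem _ (Set.mem_insert _ _)))))))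
    have mg8 : (X 2 * X 3 ^ m : MvPolynomial (Fin 4) K) ∈ relIdeal K m := hgen _ (Set.mem_insert_of_mem _ (Set.mem_insert_of_mem _ (Set.mem_insert_of_mem _ (Set.mem_insert_of_mem _ (Set.mem_insert_of_mem _ (Set.mem_insert_of_mem _ (Set.mem_insert_of_mem _ (Set.mem_insert _ _))))))))
    have hmulz : ∀ g r : MvPolynomial (Fin 4) K, g ∈ relIdeal K m → π (g * r) = 0 :=
      fun g r h => by rw [map_mul, hzero g h, zero_mul]
    have hrel : ∀ l : ℕ, π (X 1 * X 2 * X 3 ^ l) = π (X 0 * X 3 ^ (l + 1)) := by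
      intro l
      refine Ideal.Quotient.eq.mpr ?_
      have h : (X 1 * X 2 * X 3 ^ l - X 0 * X 3 ^ (l + 1) : MvPolynomial (Fin 4) K)
          = (X 1 * X 2 - X 0 * X 3) * X 3 ^ l := by ring
      rw [h]
      exact Ideal.mul_mem_right _ _ (hgen _ (Set.mem_insert_of_mem _ (Set.mem_insert_of_mem _ (Set.mem_insert_of_mem _ (Set.mem_insert_of_mem _ (Set.mem_insert_of_mem _ (Set.mem_insert_of_mem _ (Set.mem_insert_of_mem _ (Set.mem_insert_of_mem _ (rfl))))))))))
    have hS : ∀ j, π (vp K m j) ∈ Submodule.span K (Set.range v) :=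
      fun j => Submodule.subset_span ⟨j, hv j⟩
    have hXmul : ∀ (n : Fin 4) (j : Fin 2 ⊕ Fin m × Fin 4),
        π (vp K m j) * π (X n) ∈ Submodule.span K (Set.range v) := by
      intro n j
      rw [← map_mul]
      rcases j with j | ⟨l, k⟩
      · fin_cases j <;> fin_cases n
        · show π (vp K m (Sum.inl 0) * X 0) ∈ Submodule.span K (Set.range v)
          exact Submodule.subset_span ⟨Sum.inl 1, by
            rw [hv]; exact DFunLike.congr_arg π (by simp [vp] <;> ring)⟩
        · show π (vp K m (Sum.inl 0) * X 1) ∈ Submodule.span K (Set.range v)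
          exact Submodule.subset_span ⟨Sum.inr (⟨0, hm⟩, 2), by
            rw [hv]; exact DFunLike.congr_arg π (by simp [vp] <;> ring)⟩
        · show π (vp K m (Sum.inl 0) * X 2) ∈ Submodule.span K (Set.range v)
          exact Submodule.subset_span ⟨Sum.inr (⟨0, hm⟩, 3), by
            rw [hv]; exact DFunLike.congr_arg π (by simp [vp] <;> ring)⟩
        · show π (vp K m (Sum.inl 0) * X 3) ∈ Submodule.span K (Set.range v)
          exact Submodule.subset_span ⟨Sum.inr (⟨0, hm⟩, 0), by
            rw [hv]; exact DFunLike.congr_arg π (by simp [vp] <;> ring)⟩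
        · show π (vp K m (Sum.inl 1) * X 0) ∈ Submodule.span K (Set.range v)
          rw [show (vp K m (Sum.inl 1) * X 0 : MvPolynomial (Fin 4) K) = X 0 ^ 2 * 1 by simp [vp] <;> ring]
          rw [hmulz _ _ mg1]
          exact zero_mem _
        · show π (vp K m (Sum.inl 1) * X 1) ∈ Submodule.span K (Set.range v)
          rw [show (vp K m (Sum.inl 1) * X 1 : MvPolynomial (Fin 4) K) = X 0 * X 1 * 1 by simp [vp] <;> ring]
          rw [hmulz _ _ mg5]
          exact zero_mem _
        · show π (vp K m (Sum.inl 1) * X 2) ∈ Submodule.span K (Set.range v)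
          rw [show (vp K m (Sum.inl 1) * X 2 : MvPolynomial (Fin 4) K) = X 0 * X 2 * 1 by simp [vp] <;> ring]
          rw [hmulz _ _ mg6]
          exact zero_mem _
        · show π (vp K m (Sum.inl 1) * X 3) ∈ Submodule.span K (Set.range v)
          exact Submodule.subset_span ⟨Sum.inr (⟨0, hm⟩, 1), by
            rw [hv]; exact DFunLike.congr_arg π (by simp [vp] <;> ring)⟩
      · have hl : (l : ℕ) < m := l.2
        fin_cases k <;> fin_cases n
        · show π (vp K m (Sum.inr (l, 0)) * X 0) ∈ Submodule.span K (Set.range v)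
          exact Submodule.subset_span ⟨Sum.inr (l, 1), by
            rw [hv]; exact DFunLike.congr_arg π (by simp [vp] <;> ring)⟩
        · by_cases hlt : (l : ℕ) + 1 < m
          show π (vp K m (Sum.inr (l, 0)) * X 1) ∈ Submodule.span K (Set.range v)
          exact Submodule.subset_span ⟨Sum.inr (⟨(l : ℕ) + 1, hlt⟩, 2), by
            rw [hv]; exact DFunLike.congr_arg π (by simp [vp] <;> ring)⟩
          · have he : (l : ℕ) + 1 = m := by omega
            show π (vp K m (Sum.inr (l, 0)) * X 1) ∈ Submodule.span K (Set.range v)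
            rw [show (vp K m (Sum.inr (l, 0)) * X 1 : MvPolynomial (Fin 4) K) = X 1 * X 3 ^ ((l : ℕ) + 1) * 1 by simp [vp] <;> ring]
            rw [he]
            rw [hmulz _ _ mg7]
            exact zero_mem _
        · by_cases hlt : (l : ℕ) + 1 < m
          show π (vp K m (Sum.inr (l, 0)) * X 2) ∈ Submodule.span K (Set.range v)
          exact Submodule.subset_span ⟨Sum.inr (⟨(l : ℕ) + 1, hlt⟩, 3), by
            rw [hv]; exact DFunLike.congr_arg π (by simp [vp] <;> ring)⟩
          · have he : (l : ℕ) + 1 = m := by omega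
            show π (vp K m (Sum.inr (l, 0)) * X 2) ∈ Submodule.span K (Set.range v)
            rw [show (vp K m (Sum.inr (l, 0)) * X 2 : MvPolynomial (Fin 4) K) = X 2 * X 3 ^ ((l : ℕ) + 1) * 1 by simp [vp] <;> ring]
            rw [he]
            rw [hmulz _ _ mg8]
            exact zero_mem _
        · by_cases hlt : (l : ℕ) + 1 < m
          show π (vp K m (Sum.inr (l, 0)) * X 3) ∈ Submodule.span K (Set.range v)
          exact Submodule.subset_span ⟨Sum.inr (⟨(l : ℕ) + 1, hlt⟩, 0), by
            rw [hv]; exact DFunLike.congr_arg π (by simp [vp] <;> ring)⟩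
          · have he : (l : ℕ) + 1 = m := by omega
            show π (vp K m (Sum.inr (l, 0)) * X 3) ∈ Submodule.span K (Set.range v)
            rw [show (vp K m (Sum.inr (l, 0)) * X 3 : MvPolynomial (Fin 4) K) = X 3 ^ ((l : ℕ) + 1 + 1) * 1 by simp [vp] <;> ring]
            rw [he]
            rw [hmulz _ _ mg4]
            exact zero_mem _
        · show π (vp K m (Sum.inr (l, 1)) * X 0) ∈ Submodule.span K (Set.range v)
          rw [show (vp K m (Sum.inr (l, 1)) * X 0 : MvPolynomial (Fin 4) K) = X 0 ^ 2 * X 3 ^ ((l : ℕ) + 1) by simp [vp] <;> ring]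
          rw [hmulz _ _ mg1]
          exact zero_mem _
        · show π (vp K m (Sum.inr (l, 1)) * X 1) ∈ Submodule.span K (Set.range v)
          rw [show (vp K m (Sum.inr (l, 1)) * X 1 : MvPolynomial (Fin 4) K) = X 0 * X 1 * X 3 ^ ((l : ℕ) + 1) by simp [vp] <;> ring]
          rw [hmulz _ _ mg5]
          exact zero_mem _
        · show π (vp K m (Sum.inr (l, 1)) * X 2) ∈ Submodule.span K (Set.range v)
          rw [show (vp K m (Sum.inr (l, 1)) * X 2 : MvPolynomial (Fin 4) K) = X 0 * X 2 * X 3 ^ ((l : ℕ) + 1) by simp [vp] <;> ring]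
          rw [hmulz _ _ mg6]
          exact zero_mem _
        · by_cases hlt : (l : ℕ) + 1 < m
          show π (vp K m (Sum.inr (l, 1)) * X 3) ∈ Submodule.span K (Set.range v)
          exact Submodule.subset_span ⟨Sum.inr (⟨(l : ℕ) + 1, hlt⟩, 1), by
            rw [hv]; exact DFunLike.congr_arg π (by simp [vp] <;> ring)⟩
          · have he : (l : ℕ) + 1 = m := by omega
            show π (vp K m (Sum.inr (l, 1)) * X 3) ∈ Submodule.span K (Set.range v)
            rw [show (vp K m (Sum.inr (l, 1)) * X 3 : MvPolynomial (Fin 4) K) = X 3 ^ ((l : ℕ) + 1 + 1) * X 0 by simp [vp] <;> ring]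
            rw [he]
            rw [hmulz _ _ mg4]
            exact zero_mem _
        · show π (vp K m (Sum.inr (l, 2)) * X 0) ∈ Submodule.span K (Set.range v)
          rw [show (vp K m (Sum.inr (l, 2)) * X 0 : MvPolynomial (Fin 4) K) = X 0 * X 1 * X 3 ^ (l : ℕ) by simp [vp] <;> ring]
          rw [hmulz _ _ mg5]
          exact zero_mem _
        · show π (vp K m (Sum.inr (l, 2)) * X 1) ∈ Submodule.span K (Set.range v)
          rw [show (vp K m (Sum.inr (l, 2)) * X 1 : MvPolynomial (Fin 4) K) = X 1 ^ 2 * X 3 ^ (l : ℕ) by simp [vp] <;> ring]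
          rw [hmulz _ _ mg2]
          exact zero_mem _
        · show π (vp K m (Sum.inr (l, 2)) * X 2) ∈ Submodule.span K (Set.range v)
          rw [show (vp K m (Sum.inr (l, 2)) * X 2 : MvPolynomial (Fin 4) K) = X 1 * X 2 * X 3 ^ (l : ℕ) by
            simp [vp] <;> ring, hrel (l : ℕ)]
          exact Submodule.subset_span ⟨Sum.inr (l, 1), by
            rw [hv]; exact DFunLike.congr_arg π (by simp [vp] <;> ring)⟩
        · by_cases hlt : (l : ℕ) + 1 < m
          show π (vp K m (Sum.inr (l, 2)) * X 3) ∈ Submodule.span K (Set.range v)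
          exact Submodule.subset_span ⟨Sum.inr (⟨(l : ℕ) + 1, hlt⟩, 2), by
            rw [hv]; exact DFunLike.congr_arg π (by simp [vp] <;> ring)⟩
          · have he : (l : ℕ) + 1 = m := by omega
            show π (vp K m (Sum.inr (l, 2)) * X 3) ∈ Submodule.span K (Set.range v)
            rw [show (vp K m (Sum.inr (l, 2)) * X 3 : MvPolynomial (Fin 4) K) = X 1 * X 3 ^ ((l : ℕ) + 1) * 1 by simp [vp] <;> ring]
            rw [he]
            rw [hmulz _ _ mg7]
            exact zero_mem _
        · show π (vp K m (Sum.inr (l, 3)) * X 0) ∈ Submodule.span K (Set.range v)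
          rw [show (vp K m (Sum.inr (l, 3)) * X 0 : MvPolynomial (Fin 4) K) = X 0 * X 2 * X 3 ^ (l : ℕ) by simp [vp] <;> ring]
          rw [hmulz _ _ mg6]
          exact zero_mem _
        · show π (vp K m (Sum.inr (l, 3)) * X 1) ∈ Submodule.span K (Set.range v)
          rw [show (vp K m (Sum.inr (l, 3)) * X 1 : MvPolynomial (Fin 4) K) = X 1 * X 2 * X 3 ^ (l : ℕ) by
            simp [vp] <;> ring, hrel (l : ℕ)]
          exact Submodule.subset_span ⟨Sum.inr (l, 1), by
            rw [hv]; exact DFunLike.congr_arg π (by simp [vp] <;> ring)⟩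
        · show π (vp K m (Sum.inr (l, 3)) * X 2) ∈ Submodule.span K (Set.range v)
          rw [show (vp K m (Sum.inr (l, 3)) * X 2 : MvPolynomial (Fin 4) K) = X 2 ^ 2 * X 3 ^ (l : ℕ) by simp [vp] <;> ring]
          rw [hmulz _ _ mg3]
          exact zero_mem _
        · by_cases hlt : (l : ℕ) + 1 < m
          show π (vp K m (Sum.inr (l, 3)) * X 3) ∈ Submodule.span K (Set.range v)
          exact Submodule.subset_span ⟨Sum.inr (⟨(l : ℕ) + 1, hlt⟩, 3), by
            rw [hv]; exact DFunLike.congr_arg π (by simp [vp] <;> ring)⟩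
          · have he : (l : ℕ) + 1 = m := by omega
            show π (vp K m (Sum.inr (l, 3)) * X 3) ∈ Submodule.span K (Set.range v)
            rw [show (vp K m (Sum.inr (l, 3)) * X 3 : MvPolynomial (Fin 4) K) = X 2 * X 3 ^ ((l : ℕ) + 1) * 1 by simp [vp] <;> ring]
            rw [he]
            rw [hmulz _ _ mg8]
            exact zero_mem _
    induction p using MvPolynomial.induction_on with
    | C a =>
      have h1 : π (C a : MvPolynomial (Fin 4) K) = a • π (vp K m (Sum.inl 0)) := by
        have h2 : (C a : MvPolynomial (Fin 4) K) = a • vp K m (Sum.inl 0) := by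
          simp [vp, smul_eq_C_mul]
        rw [h2]
        exact map_smul (Ideal.Quotient.mkₐ K (relIdeal K m)) a _
      rw [h1]
      exact Submodule.smul_mem _ _ (hS _)
    | add p q hp hq => rw [map_add π p q]; exact add_mem hp hq
    | mul_X p n hp =>
      rw [map_mul]
      refine Submodule.span_induction ?_ ?_ ?_ ?_ hp
      · rintro _ ⟨j, rfl⟩
        rw [hv]
        exact hXmul n j
      · rw [zero_mul]; exact zero_mem _
      · intro a b _ _ ha hb; rw [add_mul]; exact add_mem ha hb
      · intro c a _ ha; rw [smul_mul_assoc]; exact Submodule.smul_mem _ _ ha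
end

section
/- Let m ≥ 1. The fundamental parallelepiped Π of Δ₂^m contains exactly 4m+2 lattice points. -/
noncomputable def liftedVertex (m : ℕ) (i : Fin (m + 2)) : Fin (m + 2) → ℝ :=
  fun j =>
    if j = 0 then 1
    else if (i : ℕ) < m + 1 then (if (j : ℕ) = (i : ℕ) + 1 then 1 else 0)
    else if (j : ℕ) ≤ m then -2 else -(2 * (m : ℝ) + 1)

noncomputable def fpp (m : ℕ) : Set (Fin (m + 2) → ℝ) :=
  { p | ∃ a : Fin (m + 2) → ℝ, (∀ i, 0 ≤ a i ∧ a i < 1) ∧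
      p = ∑ i, a i • liftedVertex m i }

lemma sumApply (m : ℕ) (a : Fin (m+2) → ℝ) (j : Fin (m+2)) :
    (∑ i, a i • liftedVertex m i) j = ∑ i, a i * liftedVertex m i j := by
  simp [Finset.sum_apply]

lemma coord0 (m : ℕ) (a : Fin (m+2) → ℝ) :
    (∑ i, a i • liftedVertex m i) 0 = ∑ i, a i := by
  rw [sumApply]
  simp [liftedVertex]

lemma coordj (m : ℕ) (a : Fin (m+2) → ℝ) (j : Fin (m+2)) (h1 : (j:ℕ) ≠ 0) (h2 : (j:ℕ) ≤ m) :
    (∑ i, a i • liftedVertex m i) j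
      = a ⟨(j:ℕ)-1, by omega⟩ - 2 * a (Fin.last (m+1)) := by
  rw [sumApply, Fin.sum_univ_castSucc]
  have hj0 : j ≠ 0 := by
    intro h; apply h1; rw [h]; rfl
  have hlast : liftedVertex m (Fin.last (m+1)) j = -2 := by
    simp [liftedVertex, hj0, h2]
  rw [hlast]
  have hsum : ∑ i : Fin (m+1), a i.castSucc * liftedVertex m i.castSucc j
      = a ⟨(j:ℕ)-1, by omega⟩ := by
    rw [Finset.sum_eq_single (⟨(j:ℕ)-1, by omega⟩ : Fin (m+1))]
    · have : liftedVertex m (Fin.castSucc ⟨(j:ℕ)-1, by omega⟩) j = 1 := by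
        simp only [liftedVertex]
        rw [if_neg hj0, if_pos (by simp only [Fin.coe_castSucc]; omega),
          if_pos (by simp only [Fin.coe_castSucc]; omega)]
      rw [this, mul_one]
      congr 1
    · intro b _ hb
      have : liftedVertex m b.castSucc j = 0 := by
        simp only [liftedVertex]
        rw [if_neg hj0, if_pos (by simp only [Fin.coe_castSucc]; omega),
          if_neg (by intro h; apply hb; apply Fin.ext; simp only [Fin.coe_castSucc] at h ⊢; omega)]
      rw [this, mul_zero]
    · simp
  rw [hsum]; ring

lemma coordlast (m : ℕ) (a : Fin (m+2) → ℝ) :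
    (∑ i, a i • liftedVertex m i) (Fin.last (m+1))
      = a ⟨m, by omega⟩ - (2*(m:ℝ)+1) * a (Fin.last (m+1)) := by
  rw [sumApply, Fin.sum_univ_castSucc]
  have hj0 : (Fin.last (m+1)) ≠ (0 : Fin (m+2)) := by
    intro h; have := congrArg Fin.val h; simp at this
  have hlast : liftedVertex m (Fin.last (m+1)) (Fin.last (m+1)) = -(2*(m:ℝ)+1) := by
    simp [liftedVertex, hj0]
  rw [hlast]
  have hsum : ∑ i : Fin (m+1), a i.castSucc * liftedVertex m i.castSucc (Fin.last (m+1))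
      = a ⟨m, by omega⟩ := by
    rw [Finset.sum_eq_single (⟨m, by omega⟩ : Fin (m+1))]
    · have : liftedVertex m (Fin.castSucc ⟨m, by omega⟩) (Fin.last (m+1)) = 1 := by
        simp only [liftedVertex, if_neg hj0]
        rw [if_pos, if_pos] <;> simp
      rw [this, mul_one]
      congr 1
    · intro b _ hb
      have : liftedVertex m b.castSucc (Fin.last (m+1)) = 0 := by
        simp only [liftedVertex]
        rw [if_neg hj0, if_pos (by simp only [Fin.coe_castSucc]; omega),
          if_neg (by intro h; apply hb; apply Fin.ext; simp only [Fin.coe_castSucc, Fin.val_last] at h ⊢; omega)]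
      rw [this, mul_zero]
    · simp
  rw [hsum]; ring

def zvec (m k : ℕ) : Fin (m+2) → ℤ :=
  fun j =>
    if (j:ℕ) = 0 then (k : ℤ) - m * ((k/(2*m+1) : ℕ) : ℤ) - ((k/2 : ℕ) : ℤ)
    else if (j:ℕ) ≤ m then -((k/(2*m+1) : ℕ) : ℤ) else -((k/2 : ℕ) : ℤ)

lemma int_unique {x : ℝ} {n₁ n₂ : ℤ} (h1 : 0 ≤ (n₁:ℝ) + x) (h2 : (n₁:ℝ) + x < 1)
    (h3 : 0 ≤ (n₂:ℝ) + x) (h4 : (n₂:ℝ) + x < 1) : n₁ = n₂ := by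
  have ha : ((n₁ - n₂ : ℤ) : ℝ) < 1 := by push_cast; linarith
  have hb : (-1 : ℝ) < ((n₁ - n₂ : ℤ) : ℝ) := by push_cast; linarith
  have ha' : n₁ - n₂ < 1 := by exact_mod_cast ha
  have hb' : (-1 : ℤ) < n₁ - n₂ := by exact_mod_cast hb
  omega

lemma sum_split (m : ℕ) (a : Fin (m+2) → ℝ) :
    ∑ i, a i = (∑ i : Fin m, a ⟨(i:ℕ), by omega⟩) + a ⟨m, by omega⟩ + a (Fin.last (m+1)) := by
  rw [Fin.sum_univ_castSucc, Fin.sum_univ_castSucc]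
  rfl

lemma zvec_mem (m k : ℕ) (hm : 1 ≤ m) (hk : k < 4*m+2) :
    (fun j => ((zvec m k j : ℤ) : ℝ)) ∈ fpp m := by
  set q : ℕ := k / (2*m+1) with hqdef
  set r : ℕ := k / 2 with hrdef
  have hq0 : (2*m+1) * q + k % (2*m+1) = k := Nat.div_add_mod k (2*m+1)
  have hr0 : 2 * r + k % 2 = k := Nat.div_add_mod k 2
  have hx : ((k % (2*m+1) : ℕ) : ℝ) = (k:ℝ) - (2*(m:ℝ)+1)*q := by
    have h2 : k % (2*m+1) = k - (2*m+1)*q := by omega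
    have hle : (2*m+1)*q ≤ k := by omega
    rw [h2, Nat.cast_sub hle]
    push_cast; ring
  have hy : ((k % 2 : ℕ) : ℝ) = (k:ℝ) - 2*r := by
    have h2 : k % 2 = k - 2*r := by omega
    have hle : 2*r ≤ k := by omega
    rw [h2, Nat.cast_sub hle]
    push_cast; ring
  set S : ℝ := ((k % (2*m+1) : ℕ) : ℝ) / (2*m+1) with hSdef
  set U : ℝ := ((k % 2 : ℕ) : ℝ) / 2 with hUdef
  set T : ℝ := (k:ℝ) / (4*m+2) with hTdef
  set A : Fin (m+2) → ℝ := fun i => if (i:ℕ) < m then S else if (i:ℕ) = m then U else T with hA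
  have hAlt : ∀ i : Fin (m+2), (i:ℕ) < m → A i = S := by
    intro i h; simp only [hA]; rw [if_pos h]
  have hAm : A ⟨m, by omega⟩ = U := by
    show (if m < m then S else if m = m then U else T) = U
    rw [if_neg (by omega), if_pos rfl]
  have hAl : A (Fin.last (m+1)) = T := by
    show (if m+1 < m then S else if m+1 = m then U else T) = T
    rw [if_neg (by omega), if_neg (by omega)]
  refine ⟨A, ?_, ?_⟩
  · intro i
    simp only [hA]
    split_ifs
    · refine ⟨by positivity, ?_⟩
      rw [hSdef, div_lt_one (by positivity)]
      have : k % (2*m+1) < 2*m+1 := Nat.mod_lt _ (by omega)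
      have := (Nat.cast_lt (α := ℝ)).mpr this
      push_cast at this ⊢; linarith
    · refine ⟨by positivity, ?_⟩
      rw [hUdef, div_lt_one (by positivity)]
      have : k % 2 < 2 := Nat.mod_lt _ (by omega)
      have := (Nat.cast_lt (α := ℝ)).mpr this
      push_cast at this ⊢; linarith
    · refine ⟨by positivity, ?_⟩
      rw [hTdef, div_lt_one (by positivity)]
      have := (Nat.cast_lt (α := ℝ)).mpr hk
      push_cast at this ⊢; linarith
  · funext j
    by_cases hj0 : (j:ℕ) = 0
    · have hj : j = 0 := Fin.ext hj0
      subst hj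
      rw [coord0, sum_split]
      have e1 : ∑ i : Fin m, A ⟨(i:ℕ), by omega⟩ = (m:ℝ) * S := by
        have hc : ∀ i : Fin m, A ⟨(i:ℕ), by omega⟩ = S := fun i => hAlt _ i.isLt
        rw [Finset.sum_congr rfl fun i _ => hc i]
        simp [mul_comm]
      rw [e1, hAm, hAl]
      have hz : zvec m k 0 = (k : ℤ) - m * (q : ℤ) - (r : ℤ) := by
        simp only [zvec]
        rw [if_pos (by simp)]
      rw [hz, hSdef, hUdef, hTdef, hx, hy]
      push_cast
      field_simp
      ring
    · by_cases hjm : (j:ℕ) ≤ m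
      · rw [coordj m _ j hj0 hjm]
        rw [hAlt ⟨(j:ℕ)-1, by omega⟩ (by show (j:ℕ)-1 < m; omega), hAl]
        have hz : zvec m k j = -((q : ℕ) : ℤ) := by
          simp only [zvec, if_neg hj0, if_pos hjm]
          rfl
        rw [hz, hSdef, hTdef, hx]
        push_cast
        field_simp
        ring
      · have hj : j = Fin.last (m+1) := by
          apply Fin.ext; simp only [Fin.val_last]; omega
        subst hj
        rw [coordlast, hAm, hAl]
        have hz : zvec m k (Fin.last (m+1)) = -((r : ℕ) : ℤ) := by
          simp only [zvec]
          rw [if_neg (by simp only [Fin.val_last]; omega),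
            if_neg (by simp only [Fin.val_last]; omega)]
        rw [hz, hUdef, hTdef, hy]
        push_cast
        field_simp
        ring

lemma mem_imp (m : ℕ) (hm : 1 ≤ m) (z : Fin (m+2) → ℤ)
    (h : (fun j => ((z j : ℤ) : ℝ)) ∈ fpp m) :
    ∃ k, k < 4*m+2 ∧ z = zvec m k := by
  obtain ⟨a, ha, heq⟩ := h
  set t : ℝ := a (Fin.last (m+1)) with htdef
  have hz : ∀ j, ((z j : ℤ) : ℝ) = (∑ i, a i • liftedVertex m i) j := fun j => congrFun heq j
  have h0 : ((z 0 : ℤ) : ℝ) = ∑ i, a i := by rw [hz 0, coord0]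
  have hmid : ∀ j : Fin (m+2), (j:ℕ) ≠ 0 → (j:ℕ) ≤ m →
      ((z j : ℤ) : ℝ) = a ⟨(j:ℕ)-1, by omega⟩ - 2*t := by
    intro j h1 h2
    rw [hz j, coordj m a j h1 h2]
  have hlst : ((z (Fin.last (m+1)) : ℤ) : ℝ) = a ⟨m, by omega⟩ - (2*(m:ℝ)+1)*t := by
    rw [hz _, coordlast]
  -- each middle z in terms of a
  have hmid' : ∀ i : Fin m, ((z ⟨(i:ℕ)+1, by omega⟩ : ℤ) : ℝ) = a ⟨(i:ℕ), by omega⟩ - 2*t := by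
    intro i
    have := hmid ⟨(i:ℕ)+1, by omega⟩ (by simp) (by show (i:ℕ)+1 ≤ m; omega)
    convert this using 3
    exact Fin.ext (by simp)
  set Z : ℤ := z 0 - (∑ i : Fin m, z ⟨(i:ℕ)+1, by omega⟩) - z (Fin.last (m+1)) with hZdef
  have hZ : (Z : ℝ) = (4*(m:ℝ)+2) * t := by
    have hsum : (∑ i : Fin m, ((z ⟨(i:ℕ)+1, by omega⟩ : ℤ) : ℝ))
        = (∑ i : Fin m, a ⟨(i:ℕ), by omega⟩) - (m:ℝ)*(2*t) := by
      rw [Finset.sum_congr rfl fun i _ => hmid' i, Finset.sum_sub_distrib]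
      simp [mul_comm]
    have h0' : ((z 0 : ℤ) : ℝ)
        = (∑ i : Fin m, a ⟨(i:ℕ), by omega⟩) + a ⟨m, by omega⟩ + t := by
      rw [h0, sum_split]
    rw [hZdef]
    push_cast
    linarith [hsum, h0', hlst]
  have ht0 : 0 ≤ t := (ha _).1
  have ht1 : t < 1 := (ha _).2
  have hZ0 : 0 ≤ Z := by
    have : (0:ℝ) ≤ (Z:ℝ) := by rw [hZ]; positivity
    exact_mod_cast this
  have hZlt : Z < 4*m+2 := by
    have : (Z:ℝ) < 4*(m:ℝ)+2 := by
      rw [hZ]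
      have : (0:ℝ) < 4*(m:ℝ)+2 := by positivity
      nlinarith
    exact_mod_cast (by push_cast; linarith : (Z:ℝ) < ((4*m+2 : ℕ) : ℝ))
  refine ⟨Z.toNat, by omega, ?_⟩
  set k : ℕ := Z.toNat with hkdef
  have hkZ : (k : ℤ) = Z := Int.toNat_of_nonneg hZ0
  have hkr : (k : ℝ) = (4*(m:ℝ)+2) * t := by
    rw [← hZ]; exact_mod_cast congrArg (fun n : ℤ => (n:ℝ)) hkZ
  set q : ℕ := k / (2*m+1) with hqdef
  set r : ℕ := k / 2 with hrdef
  have hq0 : (2*m+1) * q + k % (2*m+1) = k := Nat.div_add_mod k (2*m+1)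
  have hr0 : 2 * r + k % 2 = k := Nat.div_add_mod k 2
  have hden : (0:ℝ) < 2*(m:ℝ)+1 := by positivity
  have h2t : 2*t = (k:ℝ)/(2*(m:ℝ)+1) := by
    rw [eq_div_iff (by positivity)]; linarith [hkr]
  have hmt : (2*(m:ℝ)+1)*t = (k:ℝ)/2 := by
    rw [eq_div_iff (by norm_num)]; linarith [hkr]
  -- q bounds
  have hqle : ((q:ℝ)) * (2*(m:ℝ)+1) ≤ k := by
    have : (2*m+1) * q ≤ k := by omega
    have := (Nat.cast_le (α := ℝ)).mpr this
    push_cast at this; linarith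
  have hqgt : (k:ℝ) < ((q:ℝ)+1) * (2*(m:ℝ)+1) := by
    have : k < (2*m+1) * (q+1) := by
      have h1 : k % (2*m+1) < 2*m+1 := Nat.mod_lt _ (by omega)
      have h2 : (2*m+1)*q + k % (2*m+1) < (2*m+1)*q + (2*m+1) := Nat.add_lt_add_left h1 _
      rw [hq0] at h2
      calc k < (2*m+1)*q + (2*m+1) := h2
        _ = (2*m+1)*(q+1) := by ring
    have := (Nat.cast_lt (α := ℝ)).mpr this
    push_cast at this; linarith
  have hrle : ((r:ℝ)) * 2 ≤ k := by
    have : 2 * r ≤ k := by omega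
    have := (Nat.cast_le (α := ℝ)).mpr this
    push_cast at this; linarith
  have hrgt : (k:ℝ) < ((r:ℝ)+1) * 2 := by
    have : k < 2 * (r+1) := by
      have := Nat.mod_lt k (y := 2) (by omega); omega
    have := (Nat.cast_lt (α := ℝ)).mpr this
    push_cast at this; linarith
  -- middle coordinates
  have hmidz : ∀ j : Fin (m+2), (j:ℕ) ≠ 0 → (j:ℕ) ≤ m → z j = -((q:ℕ) : ℤ) := by
    intro j h1 h2
    have hb := ha ⟨(j:ℕ)-1, by omega⟩
    have he := hmid j h1 h2
    apply int_unique (x := 2*t)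
    · push_cast; linarith [hb.1, he]
    · push_cast; linarith [hb.2, he]
    · rw [h2t]; push_cast
      have : (q:ℝ) ≤ (k:ℝ)/(2*(m:ℝ)+1) := (le_div_iff₀ hden).mpr hqle
      linarith
    · rw [h2t]; push_cast
      have : (k:ℝ)/(2*(m:ℝ)+1) < (q:ℝ)+1 := (div_lt_iff₀ hden).mpr hqgt
      linarith
  have hlstz : z (Fin.last (m+1)) = -((r:ℕ) : ℤ) := by
    have hb := ha ⟨m, by omega⟩
    apply int_unique (x := (2*(m:ℝ)+1)*t)
    · push_cast; linarith [hb.1, hlst]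
    · push_cast; linarith [hb.2, hlst]
    · rw [hmt]; push_cast; linarith [hrle]
    · rw [hmt]; push_cast; linarith [hrgt]
  have h0z : z 0 = (k : ℤ) - m * (q : ℤ) - (r : ℤ) := by
    have hc : ∀ i : Fin m, z ⟨(i:ℕ)+1, by omega⟩ = -((q:ℕ) : ℤ) := by
      intro i
      exact hmidz ⟨(i:ℕ)+1, by omega⟩ (by simp) (by show (i:ℕ)+1 ≤ m; omega)
    have hsz : (∑ i : Fin m, z ⟨(i:ℕ)+1, by omega⟩) = (m:ℤ) * (-(q:ℤ)) := by
      rw [Finset.sum_congr rfl fun i _ => hc i]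
      simp [mul_comm]
    have hthis : Z = z 0 - (∑ i : Fin m, z ⟨(i:ℕ)+1, by omega⟩) - z (Fin.last (m+1)) := hZdef
    rw [hsz, hlstz] at hthis
    linarith [hthis, hkZ]
  funext j
  by_cases hj0 : (j:ℕ) = 0
  · have : j = 0 := Fin.ext hj0
    subst this
    rw [h0z]
    simp only [zvec]
    rw [if_pos (by simp)]
  · by_cases hjm : (j:ℕ) ≤ m
    · rw [hmidz j hj0 hjm]
      simp only [zvec]
      rw [if_neg hj0, if_pos hjm]
    · have : j = Fin.last (m+1) := by
        apply Fin.ext; simp only [Fin.val_last]; omega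
      subst this
      rw [hlstz]
      simp only [zvec]
      rw [if_neg (by simp only [Fin.val_last]; omega),
        if_neg (by simp only [Fin.val_last]; omega)]

lemma zvec_inj (m : ℕ) (hm : 1 ≤ m) {k₁ k₂ : ℕ} (h₁ : k₁ < 4*m+2) (h₂ : k₂ < 4*m+2)
    (h : zvec m k₁ = zvec m k₂) : k₁ = k₂ := by
  have e1 := congrFun h ⟨1, by omega⟩
  have e2 := congrFun h (Fin.last (m+1))
  have e3 := congrFun h 0
  simp only [zvec] at e1 e2 e3
  rw [if_neg (by show ¬(1:ℕ) = 0; omega), if_pos (by show (1:ℕ) ≤ m; omega),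
    if_neg (by show ¬(1:ℕ) = 0; omega), if_pos (by show (1:ℕ) ≤ m; omega)] at e1
  rw [if_neg (by simp only [Fin.val_last]; omega), if_neg (by simp only [Fin.val_last]; omega),
    if_neg (by simp only [Fin.val_last]; omega), if_neg (by simp only [Fin.val_last]; omega)] at e2
  rw [if_pos (by simp), if_pos (by simp)] at e3
  have q12 : k₁ / (2*m+1) = k₂ / (2*m+1) := by exact_mod_cast neg_inj.mp e1
  have r12 : k₁ / 2 = k₂ / 2 := by exact_mod_cast neg_inj.mp e2
  rw [q12, r12] at e3
  have : (k₁ : ℤ) = k₂ := by linarith [e3]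
  exact_mod_cast this

/-- The fundamental parallelepiped of `Δ₂^m` contains exactly `4m+2` lattice points. -/
theorem stmt8 (m : ℕ) (hm : 1 ≤ m) :
    {z : Fin (m + 2) → ℤ | (fun j => ((z j : ℤ) : ℝ)) ∈ fpp m}.ncard = 4 * m + 2 := by
  have hset : {z : Fin (m + 2) → ℤ | (fun j => ((z j : ℤ) : ℝ)) ∈ fpp m}
      = ↑((Finset.range (4*m+2)).image (zvec m)) := by
    ext z
    simp only [Set.mem_setOf_eq, Finset.coe_image, Set.mem_image, Finset.mem_coe,
      Finset.mem_range]
    constructor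
    · intro h
      obtain ⟨k, hk, hzk⟩ := mem_imp m hm z h
      exact ⟨k, hk, hzk.symm⟩
    · rintro ⟨k, hk, rfl⟩
      exact zvec_mem m k hm hk
  rw [hset, Set.ncard_coe_finset, Finset.card_image_of_injOn, Finset.card_range]
  intro k₁ hk₁ k₂ hk₂ h
  exact zvec_inj m hm (Finset.mem_range.mp hk₁) (Finset.mem_range.mp hk₂) h
end

section
/- Let m ≥ 2 and R as above with Hilbert series H_R(z) = 1 + 4z + 4z² + ⋯ + 4z^m + z^{m+1}. Then H_R(−z)·P(z) ≠ 1, where P(z) = (1+z)/(1 − 3z − 3z² + z³); i.e., R fails the Koszul functional equation H_R(−z)P_K^R(z) = 1. -/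
open PowerSeries

set_option maxHeartbeats 1000000

lemma aux_coeff_neg_X_pow (n d : ℕ) :
    (coeff (R := ℚ) n) ((-X : PowerSeries ℚ) ^ d) = if n = d then (-1 : ℚ) ^ d else 0 := by
  have h1 : ((-X : PowerSeries ℚ)) ^ d = C (R := ℚ) ((-1 : ℚ) ^ d) * X ^ d := by
    rw [neg_pow, map_pow, map_neg, map_one]
  rw [h1, coeff_C_mul, coeff_X_pow]
  split <;> simp

lemma aux_coeff_term (n d : ℕ) :
    (coeff (R := ℚ) n) (4 * (-X : PowerSeries ℚ) ^ d) = if n = d then 4 * (-1 : ℚ) ^ d else 0 := by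
  have h4 : (4 : PowerSeries ℚ) = C (R := ℚ) 4 := by
    rw [map_ofNat]
  rw [h4, coeff_C_mul, aux_coeff_neg_X_pow]
  split <;> simp

/-- The fundamental parallelepiped algebra of `Δ₂^m` (with Hilbert series
`H(z) = 1 + 4z + ⋯ + 4z^m + z^{m+1}` and Poincaré series
`P(z) = (1+z)/(1-3z-3z²+z³)`) fails the Koszul functional equation
`H(-z)·P(z) = 1` for `m ≥ 2`. -/
theorem stmt15 (m : ℕ) (hm : 2 ≤ m) :
    ((1 : PowerSeries ℚ) + (∑ d ∈ Finset.Icc 1 m, 4 * (-X) ^ d) + (-X) ^ (m + 1)) *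
      ((1 + X) * (1 - 3 * X - 3 * X ^ 2 + X ^ 3 : PowerSeries ℚ)⁻¹) ≠ 1 := by
  intro h
  set A : PowerSeries ℚ :=
    (1 : PowerSeries ℚ) + (∑ d ∈ Finset.Icc 1 m, 4 * (-X) ^ d) + (-X) ^ (m + 1) with hA
  set B : PowerSeries ℚ := 1 - 3 * X - 3 * X ^ 2 + X ^ 3 with hB
  have hBc : constantCoeff (R := ℚ) B ≠ 0 := by
    simp [hB, map_sub, map_add, map_mul, map_pow, constantCoeff_X]
  have hinv : B⁻¹ * B = 1 := PowerSeries.inv_mul_cancel B hBc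
  have key : A * (1 + X) = B := by
    calc A * (1 + X) = A * (1 + X) * (B⁻¹ * B) := by rw [hinv, mul_one]
    _ = (A * ((1 + X) * B⁻¹)) * B := by ring
    _ = B := by rw [h, one_mul]
  have hc := congrArg (coeff (R := ℚ) 2) key
  have hS : (coeff (R := ℚ) 2) (∑ d ∈ Finset.Icc 1 m, 4 * (-X : PowerSeries ℚ) ^ d) = 4 := by
    rw [map_sum, Finset.sum_eq_single 2]
    · rw [aux_coeff_term]; norm_num
    · intro d hd hne
      rw [aux_coeff_term, if_neg (fun hh => hne hh.symm)]
    · intro habs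
      exact absurd (Finset.mem_Icc.mpr ⟨one_le_two, hm⟩) habs
  have hS1 : (coeff (R := ℚ) 1) (∑ d ∈ Finset.Icc 1 m, 4 * (-X : PowerSeries ℚ) ^ d) = -4 := by
    rw [map_sum, Finset.sum_eq_single 1]
    · rw [aux_coeff_term]; norm_num
    · intro d hd hne
      rw [aux_coeff_term, if_neg (fun hh => hne hh.symm)]
    · intro habs
      exact absurd (Finset.mem_Icc.mpr ⟨le_refl 1, le_trans one_le_two hm⟩) habs
  have hm1 : (coeff (R := ℚ) 2) ((-X : PowerSeries ℚ) ^ (m + 1)) = 0 := by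
    rw [aux_coeff_neg_X_pow, if_neg (by omega)]
  have hm2 : (coeff (R := ℚ) 1) ((-X : PowerSeries ℚ) ^ (m + 1)) = 0 := by
    rw [aux_coeff_neg_X_pow, if_neg (by omega)]
  rw [mul_add, mul_one, map_add, coeff_succ_mul_X] at hc
  have hA2 : (coeff (R := ℚ) 2) A = 4 := by
    rw [hA, map_add, map_add, hS, hm1, coeff_one]
    norm_num
  have hA1 : (coeff (R := ℚ) 1) A = -4 := by
    rw [hA, map_add, map_add, hS1, hm2, coeff_one]
    norm_num
  have hB2 : (coeff (R := ℚ) 2) B = -3 := by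
    have h3 : (3 : PowerSeries ℚ) = C (R := ℚ) 3 := by rw [map_ofNat]
    rw [hB, map_add, map_sub, map_sub, coeff_one, h3, coeff_C_mul, coeff_C_mul,
      coeff_X, coeff_X_pow, coeff_X_pow]
    norm_num
  rw [hA2, hA1, hB2] at hc
  norm_num at hc
end

section
/- Let m ≥ 1 and R = K[x1,x2,x3,x4]/(x1², x2², x3², x4^{m+1}, x1x2, x1x3, x2x4^m, x3x4^m, x2x3 − x1x4). Then R is a local Artinian ring with maximal ideal 𝔪 = (x1,x2,x3,x4), and its socle is one-dimensional, spanned by x1·x4^m; in particular R is Gorenstein. -/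
open MvPolynomial

namespace Stmt17Aux

/-- exponent vector -/
noncomputable def ee (a b c d : ℕ) : Fin 4 →₀ ℕ :=
  Finsupp.single 0 a + Finsupp.single 1 b + Finsupp.single 2 c + Finsupp.single 3 d

lemma ee_apply (a b c d : ℕ) (i : Fin 4) : ee a b c d i = ![a, b, c, d] i := by
  fin_cases i <;> simp [ee, Finsupp.single_apply]

lemma ee_le {a b c d a' b' c' d' : ℕ} :
    ee a b c d ≤ ee a' b' c' d' ↔ a ≤ a' ∧ b ≤ b' ∧ c ≤ c' ∧ d ≤ d' := by
  rw [Finsupp.le_def]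
  constructor
  · intro h
    refine ⟨?_, ?_, ?_, ?_⟩
    · simpa [ee_apply] using h 0
    · simpa [ee_apply] using h 1
    · simpa [ee_apply] using h 2
    · simpa [ee_apply] using h 3
  · rintro ⟨h1, h2, h3, h4⟩ i
    fin_cases i <;> simpa [ee_apply]

lemma ee_sub {a b c d a' b' c' d' : ℕ} :
    ee a b c d - ee a' b' c' d' = ee (a - a') (b - b') (c - c') (d - d') := by
  ext i
  fin_cases i <;> simp [Finsupp.tsub_apply, ee_apply]

lemma ee_inj {a b c d a' b' c' d' : ℕ} :
    ee a b c d = ee a' b' c' d' ↔ a = a' ∧ b = b' ∧ c = c' ∧ d = d' := by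
  constructor
  · intro h
    rw [Finsupp.ext_iff] at h
    refine ⟨?_, ?_, ?_, ?_⟩
    · simpa [ee_apply] using h 0
    · simpa [ee_apply] using h 1
    · simpa [ee_apply] using h 2
    · simpa [ee_apply] using h 3
  · rintro ⟨rfl, rfl, rfl, rfl⟩; rfl

variable {K : Type*} [Field K]

/-- monomial shorthand -/
noncomputable def mon (a b c d : ℕ) : MvPolynomial (Fin 4) K := monomial (ee a b c d) 1

lemma mon_x0 (a : ℕ) : (X 0 ^ a : MvPolynomial (Fin 4) K) = mon a 0 0 0 := by
  rw [X_pow_eq_monomial]; congr 1; simp [ee]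
lemma mon_x1 (a : ℕ) : (X 1 ^ a : MvPolynomial (Fin 4) K) = mon 0 a 0 0 := by
  rw [X_pow_eq_monomial]; congr 1; simp [ee]
lemma mon_x2 (a : ℕ) : (X 2 ^ a : MvPolynomial (Fin 4) K) = mon 0 0 a 0 := by
  rw [X_pow_eq_monomial]; congr 1; simp [ee]
lemma mon_x3 (a : ℕ) : (X 3 ^ a : MvPolynomial (Fin 4) K) = mon 0 0 0 a := by
  rw [X_pow_eq_monomial]; congr 1; simp [ee]

lemma ee_add {a b c d a' b' c' d' : ℕ} :
    ee a b c d + ee a' b' c' d' = ee (a + a') (b + b') (c + c') (d + d') := by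
  ext i
  fin_cases i <;> simp [ee_apply]

lemma mon_mul {a b c d a' b' c' d' : ℕ} :
    (mon a b c d * mon a' b' c' d' : MvPolynomial (Fin 4) K)
      = mon (a + a') (b + b') (c + c') (d + d') := by
  rw [mon, mon, monomial_mul, one_mul, ee_add]
  rfl

lemma coeff_mul_mon_of_not_le {d s : Fin 4 →₀ ℕ} (h : ¬ s ≤ d) (p : MvPolynomial (Fin 4) K) :
    coeff d (p * monomial s 1) = 0 := by
  rw [coeff_mul_monomial', if_neg h]

lemma coeff_mul_mon_of_le {d s : Fin 4 →₀ ℕ} (h : s ≤ d) (p : MvPolynomial (Fin 4) K) :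
    coeff d (p * monomial s 1) = coeff (d - s) p := by
  rw [coeff_mul_monomial', if_pos h, mul_one]

variable {m : ℕ}

lemma relIdeal_eq (m : ℕ) : relIdeal K m = Ideal.span
    {mon 2 0 0 0, mon 0 2 0 0, mon 0 0 2 0, mon 0 0 0 (m + 1), mon 1 1 0 0, mon 1 0 1 0,
      mon 0 1 0 m, mon 0 0 1 m, (mon 0 1 1 0 - mon 1 0 0 1 : MvPolynomial (Fin 4) K)} := by
  have h0 : (X 0 : MvPolynomial (Fin 4) K) = mon 1 0 0 0 := by rw [← pow_one (X 0), mon_x0]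
  have h1 : (X 1 : MvPolynomial (Fin 4) K) = mon 0 1 0 0 := by rw [← pow_one (X 1), mon_x1]
  have h2 : (X 2 : MvPolynomial (Fin 4) K) = mon 0 0 1 0 := by rw [← pow_one (X 2), mon_x2]
  have h3 : (X 3 : MvPolynomial (Fin 4) K) = mon 0 0 0 1 := by rw [← pow_one (X 3), mon_x3]
  rw [relIdeal, mon_x0 2, mon_x1 2, mon_x2 2, mon_x3 (m + 1), mon_x3 m, h0, h1, h2, h3,
    mon_mul, mon_mul, mon_mul, mon_mul, mon_mul, mon_mul]
  norm_num

/-- a linear functional vanishing on all `p * g` for `g` a generator vanishes on the ideal -/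
lemma vanish (f : MvPolynomial (Fin 4) K →ₗ[K] K)
    (h1 : ∀ p, f (p * mon 2 0 0 0) = 0) (h2 : ∀ p, f (p * mon 0 2 0 0) = 0)
    (h3 : ∀ p, f (p * mon 0 0 2 0) = 0) (h4 : ∀ p, f (p * mon 0 0 0 (m + 1)) = 0)
    (h5 : ∀ p, f (p * mon 1 1 0 0) = 0) (h6 : ∀ p, f (p * mon 1 0 1 0) = 0)
    (h7 : ∀ p, f (p * mon 0 1 0 m) = 0) (h8 : ∀ p, f (p * mon 0 0 1 m) = 0)
    (h9 : ∀ p, f (p * (mon 0 1 1 0 - mon 1 0 0 1)) = 0) :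
    ∀ q ∈ relIdeal K m, f q = 0 := by
  have key : ∀ q ∈ relIdeal K m, ∀ p, f (p * q) = 0 := by
    intro q hq
    rw [relIdeal_eq] at hq
    refine Submodule.span_induction ?_ ?_ ?_ ?_ hq
    · intro x hx p
      simp only [Set.mem_insert_iff, Set.mem_singleton_iff] at hx
      rcases hx with rfl | rfl | rfl | rfl | rfl | rfl | rfl | rfl | rfl
      exacts [h1 p, h2 p, h3 p, h4 p, h5 p, h6 p, h7 p, h8 p, h9 p]
    · intro p; simp
    · intro x y _ _ ihx ihy p
      rw [mul_add, map_add, ihx, ihy, add_zero]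
    · intro a x _ ih p
      rw [smul_eq_mul, ← mul_assoc]
      exact ih (p * a)
  intro q hq
  simpa using key q hq 1

lemma LA_single (d : Fin 4 →₀ ℕ)
    (h1 : ¬ ee 2 0 0 0 ≤ d) (h2 : ¬ ee 0 2 0 0 ≤ d) (h3 : ¬ ee 0 0 2 0 ≤ d)
    (h4 : ¬ ee 0 0 0 (m + 1) ≤ d) (h5 : ¬ ee 1 1 0 0 ≤ d) (h6 : ¬ ee 1 0 1 0 ≤ d)
    (h7 : ¬ ee 0 1 0 m ≤ d) (h8 : ¬ ee 0 0 1 m ≤ d) (h9 : ¬ ee 0 1 1 0 ≤ d)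
    (h10 : ¬ ee 1 0 0 1 ≤ d) :
    ∀ q ∈ relIdeal K m, coeff d q = 0 := by
  have := vanish (m := m) (lcoeff K d) ?_ ?_ ?_ ?_ ?_ ?_ ?_ ?_ ?_
  · simpa [lcoeff_apply] using this
  all_goals intro p
  · simpa [lcoeff_apply, mon] using coeff_mul_mon_of_not_le h1 p
  · simpa [lcoeff_apply, mon] using coeff_mul_mon_of_not_le h2 p
  · simpa [lcoeff_apply, mon] using coeff_mul_mon_of_not_le h3 p
  · simpa [lcoeff_apply, mon] using coeff_mul_mon_of_not_le h4 p
  · simpa [lcoeff_apply, mon] using coeff_mul_mon_of_not_le h5 p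
  · simpa [lcoeff_apply, mon] using coeff_mul_mon_of_not_le h6 p
  · simpa [lcoeff_apply, mon] using coeff_mul_mon_of_not_le h7 p
  · simpa [lcoeff_apply, mon] using coeff_mul_mon_of_not_le h8 p
  · rw [mul_sub, map_sub, lcoeff_apply, lcoeff_apply]
    rw [mon, mon, coeff_mul_mon_of_not_le h9 p, coeff_mul_mon_of_not_le h10 p, sub_zero]

/-- the two-term functional `coeff (v0 v3^(j+1)) + coeff (v1 v2 v3^j)` vanishes on the ideal -/
lemma LA_pair (j : ℕ) (hj : j < m) :
    ∀ q ∈ relIdeal K m, coeff (ee 1 0 0 (j + 1)) q + coeff (ee 0 1 1 j) q = 0 := by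
  have := vanish (m := m) (lcoeff K (ee 1 0 0 (j + 1)) + lcoeff K (ee 0 1 1 j))
    ?_ ?_ ?_ ?_ ?_ ?_ ?_ ?_ ?_
  · simpa [lcoeff_apply] using this
  all_goals intro p
  all_goals simp only [LinearMap.add_apply, lcoeff_apply, mon]
  · rw [coeff_mul_mon_of_not_le (by rw [ee_le]; omega) p,
      coeff_mul_mon_of_not_le (by rw [ee_le]; omega) p, add_zero]
  · rw [coeff_mul_mon_of_not_le (by rw [ee_le]; omega) p,
      coeff_mul_mon_of_not_le (by rw [ee_le]; omega) p, add_zero]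
  · rw [coeff_mul_mon_of_not_le (by rw [ee_le]; omega) p,
      coeff_mul_mon_of_not_le (by rw [ee_le]; omega) p, add_zero]
  · rw [coeff_mul_mon_of_not_le (by rw [ee_le]; omega) p,
      coeff_mul_mon_of_not_le (by rw [ee_le]; omega) p, add_zero]
  · rw [coeff_mul_mon_of_not_le (by rw [ee_le]; omega) p,
      coeff_mul_mon_of_not_le (by rw [ee_le]; omega) p, add_zero]
  · rw [coeff_mul_mon_of_not_le (by rw [ee_le]; omega) p,
      coeff_mul_mon_of_not_le (by rw [ee_le]; omega) p, add_zero]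
  · rw [coeff_mul_mon_of_not_le (by rw [ee_le]; omega) p,
      coeff_mul_mon_of_not_le (by rw [ee_le]; omega) p, add_zero]
  · rw [coeff_mul_mon_of_not_le (by rw [ee_le]; omega) p,
      coeff_mul_mon_of_not_le (by rw [ee_le]; omega) p, add_zero]
  · rw [mul_sub, coeff_sub, coeff_sub]
    rw [coeff_mul_mon_of_not_le (by rw [ee_le]; omega) p,
      coeff_mul_mon_of_le (by rw [ee_le]; omega) p,
      coeff_mul_mon_of_le (by rw [ee_le]; omega) p,
      coeff_mul_mon_of_not_le (by rw [ee_le]; omega) p, ee_sub, ee_sub]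
    norm_num

lemma mem_of_le_mem {s u : Fin 4 →₀ ℕ} (h : s ≤ u)
    (hs : (monomial s 1 : MvPolynomial (Fin 4) K) ∈ relIdeal K m) :
    (monomial u 1 : MvPolynomial (Fin 4) K) ∈ relIdeal K m := by
  have : (monomial u 1 : MvPolynomial (Fin 4) K) = monomial (u - s) 1 * monomial s 1 := by
    rw [monomial_mul, one_mul, tsub_add_cancel_of_le h]
  rw [this]
  exact Ideal.mul_mem_left _ _ hs

lemma gen_mem (g : MvPolynomial (Fin 4) K)
    (hg : g ∈ ({mon 2 0 0 0, mon 0 2 0 0, mon 0 0 2 0, mon 0 0 0 (m + 1), mon 1 1 0 0,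
      mon 1 0 1 0, mon 0 1 0 m, mon 0 0 1 m,
      (mon 0 1 1 0 - mon 1 0 0 1 : MvPolynomial (Fin 4) K)} : Set _)) :
    g ∈ relIdeal K m := by
  rw [relIdeal_eq]
  exact Ideal.subset_span hg

/-- the exponents of our spanning monomials -/
noncomputable def exs (m : ℕ) (i : Fin 4 × Fin (m + 1)) : Fin 4 →₀ ℕ :=
  ee (if i.1 = 1 then 1 else 0) (if i.1 = 2 then 1 else 0) (if i.1 = 3 then 1 else 0) i.2

lemma exs_inj : Function.Injective (exs m) := by
  rintro ⟨k, j⟩ ⟨k', j'⟩ h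
  simp only [exs] at h
  rw [ee_inj] at h
  obtain ⟨e1, e2, e3, e4⟩ := h
  have hj : j = j' := Fin.ext e4
  subst hj
  congr 1
  fin_cases k <;> fin_cases k' <;> simp_all

lemma exs_ne_ee (i : Fin 4 × Fin (m + 1)) (t : ℕ) : exs m i ≠ ee 0 1 1 t := by
  rcases i with ⟨k, j⟩
  simp only [exs, Ne, ee_inj]
  fin_cases k <;> simp

lemma ee_le' {a b c d : ℕ} {u : Fin 4 →₀ ℕ} :
    ee a b c d ≤ u ↔ a ≤ u 0 ∧ b ≤ u 1 ∧ c ≤ u 2 ∧ d ≤ u 3 := by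
  rw [Finsupp.le_def]
  constructor
  · intro h
    refine ⟨?_, ?_, ?_, ?_⟩
    · simpa [ee_apply] using h 0
    · simpa [ee_apply] using h 1
    · simpa [ee_apply] using h 2
    · simpa [ee_apply] using h 3
  · rintro ⟨h1, h2, h3, h4⟩ i
    fin_cases i <;> simpa [ee_apply]

lemma spanning (hm : 1 ≤ m) (p : MvPolynomial (Fin 4) K) :
    p ∈ (relIdeal K m).restrictScalars K ⊔
      Submodule.span K (Set.range (fun i => (monomial (exs m i) 1 : MvPolynomial (Fin 4) K))) := by
  induction p using MvPolynomial.induction_on' with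
  | add p q hp hq => exact Submodule.add_mem _ hp hq
  | monomial u a =>
    have key : (monomial u 1 : MvPolynomial (Fin 4) K) ∈ (relIdeal K m).restrictScalars K ⊔
        Submodule.span K (Set.range (fun i => (monomial (exs m i) 1 : MvPolynomial (Fin 4) K))) := by
      have hleft : ∀ s : Fin 4 →₀ ℕ, s ≤ u →
          (monomial s 1 : MvPolynomial (Fin 4) K) ∈ relIdeal K m →
          (monomial u 1 : MvPolynomial (Fin 4) K) ∈ (relIdeal K m).restrictScalars K ⊔
            Submodule.span K
              (Set.range (fun i => (monomial (exs m i) 1 : MvPolynomial (Fin 4) K))) :=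
        fun s hs hmem => Submodule.mem_sup_left (by exact mem_of_le_mem hs hmem)
      have hright : ∀ i : Fin 4 × Fin (m + 1), exs m i = u →
          (monomial u 1 : MvPolynomial (Fin 4) K) ∈ (relIdeal K m).restrictScalars K ⊔
            Submodule.span K
              (Set.range (fun i => (monomial (exs m i) 1 : MvPolynomial (Fin 4) K))) :=
        fun i hi => Submodule.mem_sup_right (Submodule.subset_span
          ⟨i, show (monomial (exs m i) 1 : MvPolynomial (Fin 4) K) = monomial u 1 by rw [hi]⟩)
      by_cases c1 : 2 ≤ u 0
      · exact hleft (ee 2 0 0 0) (by rw [ee_le']; omega) (gen_mem _ (by left; rfl))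
      by_cases c2 : 2 ≤ u 1
      · exact hleft (ee 0 2 0 0) (by rw [ee_le']; omega) (gen_mem _ (by right; left; rfl))
      by_cases c3 : 2 ≤ u 2
      · exact hleft (ee 0 0 2 0) (by rw [ee_le']; omega)
          (gen_mem _ (by right; right; left; rfl))
      by_cases c4 : m + 1 ≤ u 3
      · exact hleft (ee 0 0 0 (m + 1)) (by rw [ee_le']; omega)
          (gen_mem _ (by right; right; right; left; rfl))
      by_cases c5 : 1 ≤ u 0 ∧ 1 ≤ u 1
      · exact hleft (ee 1 1 0 0) (by rw [ee_le']; omega)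
          (gen_mem _ (by right; right; right; right; left; rfl))
      by_cases c6 : 1 ≤ u 0 ∧ 1 ≤ u 2
      · exact hleft (ee 1 0 1 0) (by rw [ee_le']; omega)
          (gen_mem _ (by right; right; right; right; right; left; rfl))
      by_cases c7 : 1 ≤ u 1 ∧ m ≤ u 3
      · exact hleft (ee 0 1 0 m) (by rw [ee_le']; omega)
          (gen_mem _ (by right; right; right; right; right; right; left; rfl))
      by_cases c8 : 1 ≤ u 2 ∧ m ≤ u 3
      · exact hleft (ee 0 0 1 m) (by rw [ee_le']; omega)
          (gen_mem _ (by right; right; right; right; right; right; right; left; rfl))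
      push_neg at c1 c2 c3 c4 c5 c6 c7 c8
      by_cases c9 : 1 ≤ u 1 ∧ 1 ≤ u 2
      · obtain ⟨n, hn⟩ : ∃ n, u 3 = n := ⟨_, rfl⟩
        have hu2 : u = ee 0 1 1 n := by
          ext w; fin_cases w <;> simp [ee_apply] <;> omega
        have hd : n + 1 ≤ m := by
          rcases c9 with ⟨hb, hc⟩
          have := c7 hb
          omega
        have hexs : exs m (1, (⟨n + 1, by omega⟩ : Fin (m + 1))) = ee 1 0 0 (n + 1) := by
          simp [exs]
        have iddy : (monomial u 1 : MvPolynomial (Fin 4) K) =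
            monomial (exs m (1, ⟨n + 1, by omega⟩)) 1 +
              mon 0 0 0 n * (mon 0 1 1 0 - mon 1 0 0 1) := by
          rw [hexs, hu2, mul_sub, mon_mul, mon_mul]
          simp only [mon]
          norm_num
        rw [iddy]
        refine Submodule.add_mem _
          (Submodule.mem_sup_right (Submodule.subset_span ⟨_, rfl⟩)) ?_
        exact Submodule.mem_sup_left (by
          exact Ideal.mul_mem_left _ _ (gen_mem _ (by
            right; right; right; right; right; right; right; right; rfl)))
      push_neg at c9
      by_cases e1 : 1 ≤ u 0
      · refine hright (1, ⟨u 3, by omega⟩) ?_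
        ext w
        fin_cases w <;> simp [exs, ee_apply] <;> omega
      by_cases e2 : 1 ≤ u 1
      · refine hright (2, ⟨u 3, by omega⟩) ?_
        ext w
        fin_cases w <;> simp [exs, ee_apply] <;> omega
      by_cases e3 : 1 ≤ u 2
      · refine hright (3, ⟨u 3, by omega⟩) ?_
        ext w
        fin_cases w <;> simp [exs, ee_apply] <;> omega
      · refine hright (0, ⟨u 3, by omega⟩) ?_
        ext w
        fin_cases w <;> simp [exs, ee_apply] <;> omega
    have : (monomial u a : MvPolynomial (Fin 4) K) = a • monomial u 1 := by
      rw [smul_monomial, smul_eq_mul, mul_one]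
    rw [this]
    exact Submodule.smul_mem _ _ key

set_option synthInstance.maxHeartbeats 1000000 in
set_option maxHeartbeats 1000000 in
lemma quotient_finite (hm : 1 ≤ m) :
    Module.Finite K (MvPolynomial (Fin 4) K ⧸ relIdeal K m) := by
  classical
  constructor
  rw [Submodule.fg_def]
  refine ⟨Set.range (fun i : Fin 4 × Fin (m + 1) =>
    Ideal.Quotient.mk (relIdeal K m) (monomial (exs m i) 1)), Set.finite_range _, ?_⟩
  rw [eq_top_iff]
  rintro x -
  obtain ⟨p, rfl⟩ := Ideal.Quotient.mk_surjective x
  have hp := spanning (K := K) hm p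
  rw [Submodule.mem_sup] at hp
  obtain ⟨q, hq, r, hr, rfl⟩ := hp
  rw [map_add, Ideal.Quotient.eq_zero_iff_mem.2 (by exact hq), zero_add]
  refine Submodule.span_induction ?_ ?_ ?_ ?_ hr
  · rintro y ⟨i, rfl⟩
    exact Submodule.subset_span ⟨i, rfl⟩
  · simp
  · intro y z _ _ hy hz
    rw [map_add]
    exact Submodule.add_mem _ hy hz
  · intro c y _ hy
    have : Ideal.Quotient.mk (relIdeal K m) (c • y)
        = c • Ideal.Quotient.mk (relIdeal K m) y := by
      rw [← Ideal.Quotient.mkₐ_eq_mk (R₁ := K), map_smul]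
    rw [this]
    exact Submodule.smul_mem _ _ hy

set_option synthInstance.maxHeartbeats 1000000 in
set_option maxHeartbeats 1000000 in
lemma quotient_artinian (hm : 1 ≤ m) :
    IsArtinianRing (MvPolynomial (Fin 4) K ⧸ relIdeal K m) := by
  have := quotient_finite (K := K) hm
  have h1 : IsArtinian K (MvPolynomial (Fin 4) K ⧸ relIdeal K m) :=
    isArtinian_of_fg_of_artinian'
  exact isArtinian_of_tower K h1

lemma X0_eq : (X 0 : MvPolynomial (Fin 4) K) = mon 1 0 0 0 := by rw [← pow_one (X 0), mon_x0]
lemma X1_eq : (X 1 : MvPolynomial (Fin 4) K) = mon 0 1 0 0 := by rw [← pow_one (X 1), mon_x1]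
lemma X2_eq : (X 2 : MvPolynomial (Fin 4) K) = mon 0 0 1 0 := by rw [← pow_one (X 2), mon_x2]
lemma X3_eq : (X 3 : MvPolynomial (Fin 4) K) = mon 0 0 0 1 := by rw [← pow_one (X 3), mon_x3]

lemma X0X3m_eq : (X 0 * X 3 ^ m : MvPolynomial (Fin 4) K) = mon 1 0 0 m := by
  rw [X0_eq, mon_x3, mon_mul]
  norm_num

lemma coeff_mul_mon' (a b c d a' b' c' d' e f g h : ℕ)
    (hle : a' ≤ a ∧ b' ≤ b ∧ c' ≤ c ∧ d' ≤ d)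
    (he : a - a' = e ∧ b - b' = f ∧ c - c' = g ∧ d - d' = h) (p : MvPolynomial (Fin 4) K) :
    coeff (ee a b c d) (p * mon a' b' c' d') = coeff (ee e f g h) p := by
  rw [mon, coeff_mul_mon_of_le (by rw [ee_le]; exact hle), ee_sub,
    he.1, he.2.1, he.2.2.1, he.2.2.2]

lemma coeff_mul_mon0 (a b c d a' b' c' d' : ℕ)
    (hle : ¬(a' ≤ a ∧ b' ≤ b ∧ c' ≤ c ∧ d' ≤ d)) (p : MvPolynomial (Fin 4) K) :
    coeff (ee a b c d) (p * mon a' b' c' d') = 0 := by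
  rw [mon, coeff_mul_mon_of_not_le (by rw [ee_le]; exact hle)]

/-- the key socle computation -/
lemma socle_key (hm : 1 ≤ m) (p : MvPolynomial (Fin 4) K)
    (h0 : p * mon 1 0 0 0 ∈ relIdeal K m) (h1 : p * mon 0 1 0 0 ∈ relIdeal K m)
    (h2 : p * mon 0 0 1 0 ∈ relIdeal K m) (h3 : p * mon 0 0 0 1 ∈ relIdeal K m) :
    p - monomial (ee 1 0 0 m) (coeff (ee 1 0 0 m) p + coeff (ee 0 1 1 (m - 1)) p)
      ∈ relIdeal K m := by
  classical
  -- claims about the coefficients of `p`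
  have clA : ∀ j, j ≤ m → coeff (ee 0 0 0 j) p = 0 := by
    intro j hj
    rcases Nat.eq_zero_or_pos j with rfl | hjpos
    · have h := LA_single (m := m) (ee 1 0 0 0)
        (by rw [ee_le]; omega) (by rw [ee_le]; omega) (by rw [ee_le]; omega)
        (by rw [ee_le]; omega) (by rw [ee_le]; omega) (by rw [ee_le]; omega)
        (by rw [ee_le]; omega) (by rw [ee_le]; omega) (by rw [ee_le]; omega)
        (by rw [ee_le]; omega) _ h0
      rwa [coeff_mul_mon' 1 0 0 0 1 0 0 0 0 0 0 0 (by omega) (by omega) p] at h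
    · have h := LA_pair (j - 1) (by omega) _ h0
      rwa [coeff_mul_mon' 1 0 0 (j - 1 + 1) 1 0 0 0 0 0 0 j (by omega) (by omega) p,
        coeff_mul_mon0 0 1 1 (j - 1) 1 0 0 0 (by omega) p, add_zero] at h
  have clB0 : coeff (ee 1 0 0 0) p = 0 := by
    have h := LA_pair 0 (by omega) _ h3
    rwa [coeff_mul_mon' 1 0 0 (0 + 1) 0 0 0 1 1 0 0 0 (by omega) (by omega) p,
      coeff_mul_mon0 0 1 1 0 0 0 0 1 (by omega) p, add_zero] at h
  have clB : ∀ j, 1 ≤ j → j < m →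
      coeff (ee 1 0 0 j) p + coeff (ee 0 1 1 (j - 1)) p = 0 := by
    intro j hj1 hjm
    have h := LA_pair j (by omega) _ h3
    rwa [coeff_mul_mon' 1 0 0 (j + 1) 0 0 0 1 1 0 0 j (by omega) (by omega) p,
      coeff_mul_mon' 0 1 1 j 0 0 0 1 0 1 1 (j - 1) (by omega) (by omega) p] at h
  have clC : ∀ j, j < m → coeff (ee 0 1 0 j) p = 0 := by
    intro j hjm
    have h := LA_pair j (by omega) _ h2
    rwa [coeff_mul_mon0 1 0 0 (j + 1) 0 0 1 0 (by omega) p,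
      coeff_mul_mon' 0 1 1 j 0 0 1 0 0 1 0 j (by omega) (by omega) p, zero_add] at h
  have clD : ∀ j, j < m → coeff (ee 0 0 1 j) p = 0 := by
    intro j hjm
    have h := LA_pair j (by omega) _ h1
    rwa [coeff_mul_mon0 1 0 0 (j + 1) 0 1 0 0 (by omega) p,
      coeff_mul_mon' 0 1 1 j 0 1 0 0 0 0 1 j (by omega) (by omega) p, zero_add] at h
  -- decompose `p - monomial (ee 1 0 0 m) cc`
  obtain ⟨cc, hcc⟩ : ∃ cc, coeff (ee 1 0 0 m) p + coeff (ee 0 1 1 (m - 1)) p = cc := ⟨_, rfl⟩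
  rw [hcc]
  have hp' := spanning (K := K) hm (p - monomial (ee 1 0 0 m) cc)
  rw [Submodule.mem_sup] at hp'
  obtain ⟨q, hq, r, hr, heq⟩ := hp'
  rw [Submodule.restrictScalars_mem] at hq
  rw [Submodule.mem_span_range_iff_exists_fun] at hr
  obtain ⟨cf, hcf⟩ := hr
  -- coefficients of r
  have hrc : ∀ i : Fin 4 × Fin (m + 1), coeff (exs m i) r = cf i := by
    intro i
    rw [← hcf, coeff_sum]
    rw [Finset.sum_eq_single i]
    · simp [coeff_smul, coeff_monomial]
    · intro b _ hb
      rw [coeff_smul, coeff_monomial, if_neg (fun h => hb (exs_inj h)), smul_zero]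
    · intro h; exact absurd (Finset.mem_univ i) h
  have hrc2 : ∀ t, coeff (ee 0 1 1 t) r = 0 := by
    intro t
    rw [← hcf, coeff_sum]
    refine Finset.sum_eq_zero fun i _ => ?_
    rw [coeff_smul, coeff_monomial, if_neg (exs_ne_ee i t), smul_zero]
  -- relation between coefficients of r, p, q
  have hco : ∀ d, coeff d r = coeff d p - (if ee 1 0 0 m = d then cc else 0) - coeff d q := by
    intro d
    have h := congrArg (coeff d) heq
    rw [coeff_sub, coeff_add, coeff_monomial] at h
    linear_combination h
  -- vanishing of the coefficients cf
  have cf0 : ∀ j : Fin (m + 1), cf (0, j) = 0 := by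
    intro j
    have hjlt := j.isLt
    have hexs : exs m (0, j) = ee 0 0 0 (j : ℕ) := by simp [exs]
    have hq0 : coeff (ee 0 0 0 (j : ℕ)) q = 0 :=
      LA_single (m := m) _ (by rw [ee_le]; omega) (by rw [ee_le]; omega) (by rw [ee_le]; omega)
        (by rw [ee_le]; omega) (by rw [ee_le]; omega) (by rw [ee_le]; omega)
        (by rw [ee_le]; omega) (by rw [ee_le]; omega) (by rw [ee_le]; omega)
        (by rw [ee_le]; omega) q hq
    have h := hrc (0, j)
    rw [hexs, hco, clA _ (by omega), hq0, if_neg (by rw [ee_inj]; omega)] at h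
    simpa using h.symm
  have cf1 : ∀ j : Fin (m + 1), cf (1, j) = 0 := by
    intro j
    have hjlt := j.isLt
    have hexs : exs m (1, j) = ee 1 0 0 (j : ℕ) := by simp [exs]
    have h := hrc (1, j)
    rw [hexs, hco] at h
    rcases Nat.eq_zero_or_pos (j : ℕ) with hj0 | hjpos
    · have hq0 : coeff (ee 1 0 0 (j : ℕ)) q = 0 := by
        rw [hj0]
        exact LA_single (m := m) _ (by rw [ee_le]; omega) (by rw [ee_le]; omega)
          (by rw [ee_le]; omega) (by rw [ee_le]; omega) (by rw [ee_le]; omega)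
          (by rw [ee_le]; omega) (by rw [ee_le]; omega) (by rw [ee_le]; omega)
          (by rw [ee_le]; omega) (by rw [ee_le]; omega) q hq
      rw [hq0, hj0, clB0, if_neg (by rw [ee_inj]; omega)] at h
      simpa using h.symm
    · -- j ≥ 1
      have hqpair := LA_pair ((j : ℕ) - 1) (by omega) q hq
      have hco2 := hco (ee 0 1 1 ((j : ℕ) - 1))
      rw [hrc2, if_neg (by rw [ee_inj]; omega)] at hco2
      have hj1 : (j : ℕ) - 1 + 1 = (j : ℕ) := by omega
      rw [hj1] at hqpair
      rcases Nat.lt_or_ge (j : ℕ) m with hjm | hjm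
      · -- middle case
        have hp := clB (j : ℕ) (by omega) hjm
        rw [if_neg (by rw [ee_inj]; omega)] at h
        linear_combination -h + hp - hqpair + hco2
      · -- j = m
        have hjeq : (j : ℕ) = m := by omega
        rw [hjeq] at h hco2 hqpair
        rw [if_pos rfl] at h
        linear_combination -h + hcc - hqpair + hco2
  have cf2 : ∀ j : Fin (m + 1), (j : ℕ) < m → cf (2, j) = 0 := by
    intro j hjm
    have hexs : exs m (2, j) = ee 0 1 0 (j : ℕ) := by simp [exs]
    have hq0 : coeff (ee 0 1 0 (j : ℕ)) q = 0 :=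
      LA_single (m := m) _ (by rw [ee_le]; omega) (by rw [ee_le]; omega) (by rw [ee_le]; omega)
        (by rw [ee_le]; omega) (by rw [ee_le]; omega) (by rw [ee_le]; omega)
        (by rw [ee_le]; omega) (by rw [ee_le]; omega) (by rw [ee_le]; omega)
        (by rw [ee_le]; omega) q hq
    have h := hrc (2, j)
    rw [hexs, hco, clC _ hjm, hq0, if_neg (by rw [ee_inj]; omega)] at h
    simpa using h.symm
  have cf3 : ∀ j : Fin (m + 1), (j : ℕ) < m → cf (3, j) = 0 := by
    intro j hjm
    have hexs : exs m (3, j) = ee 0 0 1 (j : ℕ) := by simp [exs]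
    have hq0 : coeff (ee 0 0 1 (j : ℕ)) q = 0 :=
      LA_single (m := m) _ (by rw [ee_le]; omega) (by rw [ee_le]; omega) (by rw [ee_le]; omega)
        (by rw [ee_le]; omega) (by rw [ee_le]; omega) (by rw [ee_le]; omega)
        (by rw [ee_le]; omega) (by rw [ee_le]; omega) (by rw [ee_le]; omega)
        (by rw [ee_le]; omega) q hq
    have h := hrc (3, j)
    rw [hexs, hco, clD _ hjm, hq0, if_neg (by rw [ee_inj]; omega)] at h
    simpa using h.symm
  -- r lies in the ideal
  have hrI : r ∈ relIdeal K m := by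
    rw [← hcf]
    refine Ideal.sum_mem _ ?_
    rintro ⟨k, j⟩ -
    have hjlt := j.isLt
    by_cases hk2 : k = 2 ∧ (j : ℕ) = m
    · obtain ⟨rfl, hjm⟩ := hk2
      rw [smul_eq_C_mul]
      refine Ideal.mul_mem_left _ _ ?_
      have hexs : exs m (2, j) = ee 0 1 0 m := by simp [exs, hjm]
      rw [hexs]
      exact gen_mem _ (by right; right; right; right; right; right; left; rfl)
    · by_cases hk3 : k = 3 ∧ (j : ℕ) = m
      · obtain ⟨rfl, hjm⟩ := hk3
        rw [smul_eq_C_mul]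
        refine Ideal.mul_mem_left _ _ ?_
        have hexs : exs m (3, j) = ee 0 0 1 m := by simp [exs, hjm]
        rw [hexs]
        exact gen_mem _ (by right; right; right; right; right; right; right; left; rfl)
      · have hz : cf (k, j) = 0 := by
          fin_cases k
          · exact cf0 j
          · exact cf1 j
          · exact cf2 j (by
              by_contra hc
              exact hk2 ⟨rfl, by omega⟩)
          · exact cf3 j (by
              by_contra hc
              exact hk3 ⟨rfl, by omega⟩)
        rw [hz, zero_smul]
        exact Ideal.zero_mem _
  rw [← heq]
  exact Ideal.add_mem _ hq hrI

lemma gens_subset_ker_eval :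
    ∀ a ∈ relIdeal K m, eval (0 : Fin 4 → K) a = 0 := by
  intro a ha
  have hle : relIdeal K m ≤ RingHom.ker (eval (0 : Fin 4 → K)) := by
    rw [relIdeal, Ideal.span_le]
    rintro g hg
    simp only [Set.mem_insert_iff, Set.mem_singleton_iff] at hg
    rcases hg with rfl | rfl | rfl | rfl | rfl | rfl | rfl | rfl | rfl <;>
      simp [RingHom.mem_ker]
  exact hle ha

/-- evaluation at the origin, on the quotient ring -/
noncomputable def phi (K : Type*) [Field K] (m : ℕ) :
    (MvPolynomial (Fin 4) K ⧸ relIdeal K m) →+* K :=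
  Ideal.Quotient.lift (relIdeal K m) (eval (0 : Fin 4 → K)) gens_subset_ker_eval

lemma phi_surj : Function.Surjective (phi K m) := fun c =>
  ⟨Ideal.Quotient.mk (relIdeal K m) (C c), by simp [phi]⟩

lemma mx_eq_ker :
    Ideal.span {Ideal.Quotient.mk (relIdeal K m) (X 0), Ideal.Quotient.mk (relIdeal K m) (X 1),
      Ideal.Quotient.mk (relIdeal K m) (X 2), Ideal.Quotient.mk (relIdeal K m) (X 3)}
      = RingHom.ker (phi K m) := by
  apply le_antisymm
  · rw [Ideal.span_le]
    rintro x hx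
    simp only [Set.mem_insert_iff, Set.mem_singleton_iff] at hx
    rcases hx with rfl | rfl | rfl | rfl <;>
      · rw [SetLike.mem_coe, RingHom.mem_ker]
        simp [phi]
  · rintro x hx
    obtain ⟨p, rfl⟩ := Ideal.Quotient.mk_surjective x
    rw [RingHom.mem_ker, phi, Ideal.Quotient.lift_mk] at hx
    have hc0 : coeff 0 p = 0 := by
      rw [← constantCoeff_eq, ← eval_zero]
      exact hx
    have hp : p ∈ Ideal.span (MvPolynomial.X '' (Set.univ : Set (Fin 4))) := by
      rw [mem_ideal_span_X_image]
      intro mv hmv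
      by_contra hcon
      push_neg at hcon
      have hmz : mv = 0 := by
        ext i
        exact hcon i (Set.mem_univ i)
      rw [hmz, mem_support_iff] at hmv
      exact hmv hc0
    have himg : (MvPolynomial.X '' (Set.univ : Set (Fin 4)) : Set (MvPolynomial (Fin 4) K))
        = {X 0, X 1, X 2, X 3} := by
      ext y
      simp only [Set.image_univ, Set.mem_range, Set.mem_insert_iff, Set.mem_singleton_iff]
      constructor
      · rintro ⟨i, rfl⟩
        fin_cases i
        · exact Or.inl rfl
        · exact Or.inr (Or.inl rfl)
        · exact Or.inr (Or.inr (Or.inl rfl))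
        · exact Or.inr (Or.inr (Or.inr rfl))
      · rintro (rfl | rfl | rfl | rfl)
        exacts [⟨0, rfl⟩, ⟨1, rfl⟩, ⟨2, rfl⟩, ⟨3, rfl⟩]
    rw [himg] at hp
    have := Ideal.mem_map_of_mem (Ideal.Quotient.mk (relIdeal K m)) hp
    rwa [Ideal.map_span, Set.image_insert_eq, Set.image_insert_eq, Set.image_insert_eq,
      Set.image_singleton] at this

lemma mx_maximal :
    (Ideal.span {Ideal.Quotient.mk (relIdeal K m) (X 0), Ideal.Quotient.mk (relIdeal K m) (X 1),
      Ideal.Quotient.mk (relIdeal K m) (X 2),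
      Ideal.Quotient.mk (relIdeal K m) (X 3)}).IsMaximal := by
  rw [mx_eq_ker]
  exact RingHom.ker_isMaximal_of_surjective (phi K m) phi_surj

lemma mk_X_nilpotent (i : Fin 4) :
    IsNilpotent (Ideal.Quotient.mk (relIdeal K m) (X i)) := by
  fin_cases i
  · refine ⟨2, ?_⟩
    rw [← map_pow, Ideal.Quotient.eq_zero_iff_mem]
    exact gen_mem _ (by rw [show X ((fun i => i) (⟨0, by omega⟩ : Fin 4)) = X (0 : Fin 4) from rfl, mon_x0 2]; left; rfl)
  · refine ⟨2, ?_⟩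
    rw [← map_pow, Ideal.Quotient.eq_zero_iff_mem]
    exact gen_mem _ (by rw [show X ((fun i => i) (⟨1, by omega⟩ : Fin 4)) = X (1 : Fin 4) from rfl, mon_x1 2]; right; left; rfl)
  · refine ⟨2, ?_⟩
    rw [← map_pow, Ideal.Quotient.eq_zero_iff_mem]
    exact gen_mem _ (by rw [show X ((fun i => i) (⟨2, by omega⟩ : Fin 4)) = X (2 : Fin 4) from rfl, mon_x2 2]; right; right; left; rfl)
  · refine ⟨m + 1, ?_⟩
    rw [← map_pow, Ideal.Quotient.eq_zero_iff_mem]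
    exact gen_mem _ (by rw [show X ((fun i => i) (⟨3, by omega⟩ : Fin 4)) = X (3 : Fin 4) from rfl, mon_x3 (m + 1)]; right; right; right; left; rfl)

lemma mx_unique (I : Ideal (MvPolynomial (Fin 4) K ⧸ relIdeal K m)) (hI : I.IsMaximal) :
    I = Ideal.span {Ideal.Quotient.mk (relIdeal K m) (X 0),
      Ideal.Quotient.mk (relIdeal K m) (X 1), Ideal.Quotient.mk (relIdeal K m) (X 2),
      Ideal.Quotient.mk (relIdeal K m) (X 3)} := by
  have hle : Ideal.span {Ideal.Quotient.mk (relIdeal K m) (X 0),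
      Ideal.Quotient.mk (relIdeal K m) (X 1), Ideal.Quotient.mk (relIdeal K m) (X 2),
      Ideal.Quotient.mk (relIdeal K m) (X 3)} ≤ I := by
    rw [Ideal.span_le]
    rintro x hx
    simp only [Set.mem_insert_iff, Set.mem_singleton_iff] at hx
    haveI := hI.isPrime
    have key : ∀ i : Fin 4, Ideal.Quotient.mk (relIdeal K m) (X i) ∈ I := fun i =>
      nilradical_le_prime I (mem_nilradical.2 (mk_X_nilpotent i))
    rcases hx with rfl | rfl | rfl | rfl
    exacts [key 0, key 1, key 2, key 3]
  exact ((mx_maximal (K := K) (m := m)).eq_of_le hI.ne_top hle).symm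

lemma x0x3m_ne_zero (hm : 1 ≤ m) :
    Ideal.Quotient.mk (relIdeal K m) (X 0 * X 3 ^ m) ≠ 0 := by
  intro h
  rw [Ideal.Quotient.eq_zero_iff_mem, X0X3m_eq] at h
  have hpair := LA_pair (m - 1) (by omega) _ h
  have h1 : m - 1 + 1 = m := by omega
  rw [h1, mon, coeff_monomial, coeff_monomial, if_pos rfl,
    if_neg (by rw [ee_inj]; omega)] at hpair
  norm_num at hpair

lemma v_mul_gen (hm : 1 ≤ m) :
    ∀ i : Fin 4, (X 0 * X 3 ^ m * X i : MvPolynomial (Fin 4) K) ∈ relIdeal K m := by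
  intro i
  rw [X0X3m_eq]
  fin_cases i
  · rw [show (X ((fun i => i) (⟨0, by omega⟩ : Fin 4)) : MvPolynomial (Fin 4) K) = X (0 : Fin 4)
      from rfl, X0_eq, mon_mul]
    show (monomial (ee 2 0 0 m) 1 : MvPolynomial (Fin 4) K) ∈ relIdeal K m
    exact mem_of_le_mem (s := ee 2 0 0 0) (by rw [ee_le]; omega) (gen_mem _ (by left; rfl))
  · rw [show (X ((fun i => i) (⟨1, by omega⟩ : Fin 4)) : MvPolynomial (Fin 4) K) = X (1 : Fin 4)
      from rfl, X1_eq, mon_mul]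
    show (monomial (ee 1 1 0 m) 1 : MvPolynomial (Fin 4) K) ∈ relIdeal K m
    exact mem_of_le_mem (s := ee 1 1 0 0) (by rw [ee_le]; omega)
      (gen_mem _ (by right; right; right; right; left; rfl))
  · rw [show (X ((fun i => i) (⟨2, by omega⟩ : Fin 4)) : MvPolynomial (Fin 4) K) = X (2 : Fin 4)
      from rfl, X2_eq, mon_mul]
    show (monomial (ee 1 0 1 m) 1 : MvPolynomial (Fin 4) K) ∈ relIdeal K m
    exact mem_of_le_mem (s := ee 1 0 1 0) (by rw [ee_le]; omega)
      (gen_mem _ (by right; right; right; right; right; left; rfl))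
  · rw [show (X ((fun i => i) (⟨3, by omega⟩ : Fin 4)) : MvPolynomial (Fin 4) K) = X (3 : Fin 4)
      from rfl, X3_eq, mon_mul]
    show (monomial (ee 1 0 0 (m + 1)) 1 : MvPolynomial (Fin 4) K) ∈ relIdeal K m
    exact mem_of_le_mem (s := ee 0 0 0 (m + 1)) (by rw [ee_le]; omega)
      (gen_mem _ (by right; right; right; left; rfl))

set_option synthInstance.maxHeartbeats 1000000 in
set_option maxHeartbeats 1000000 in
lemma socle_eq (hm : 1 ≤ m) :
    {r : MvPolynomial (Fin 4) K ⧸ relIdeal K m |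
      ∀ s ∈ Ideal.span {Ideal.Quotient.mk (relIdeal K m) (X 0),
        Ideal.Quotient.mk (relIdeal K m) (X 1), Ideal.Quotient.mk (relIdeal K m) (X 2),
        Ideal.Quotient.mk (relIdeal K m) (X 3)}, r * s = 0} =
      (Submodule.span K {Ideal.Quotient.mk (relIdeal K m) (X 0 * X 3 ^ m)} :
        Submodule K (MvPolynomial (Fin 4) K ⧸ relIdeal K m)) := by
  ext x
  simp only [Set.mem_setOf_eq, SetLike.mem_coe]
  constructor
  · intro hx
    obtain ⟨p, rfl⟩ := Ideal.Quotient.mk_surjective x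
    have hXmem : ∀ i : Fin 4, Ideal.Quotient.mk (relIdeal K m) (X i) ∈
        Ideal.span {Ideal.Quotient.mk (relIdeal K m) (X 0),
          Ideal.Quotient.mk (relIdeal K m) (X 1), Ideal.Quotient.mk (relIdeal K m) (X 2),
          Ideal.Quotient.mk (relIdeal K m) (X 3)} := by
      intro i
      apply Ideal.subset_span
      fin_cases i
      · exact Set.mem_insert _ _
      · exact Set.mem_insert_of_mem _ (Set.mem_insert _ _)
      · exact Set.mem_insert_of_mem _ (Set.mem_insert_of_mem _ (Set.mem_insert _ _))
      · exact Set.mem_insert_of_mem _ (Set.mem_insert_of_mem _ (Set.mem_insert_of_mem _ rfl))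
    have hmul : ∀ i : Fin 4, p * X i ∈ relIdeal K m := fun i => by
      have h := hx _ (hXmem i)
      rwa [← map_mul, Ideal.Quotient.eq_zero_iff_mem] at h
    have hkey := socle_key hm p (by rw [← X0_eq]; exact hmul 0) (by rw [← X1_eq]; exact hmul 1)
      (by rw [← X2_eq]; exact hmul 2) (by rw [← X3_eq]; exact hmul 3)
    rw [Submodule.mem_span_singleton]
    refine ⟨coeff (ee 1 0 0 m) p + coeff (ee 0 1 1 (m - 1)) p, ?_⟩
    have h0 := Ideal.Quotient.eq_zero_iff_mem.2 hkey
    rw [map_sub, sub_eq_zero] at h0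
    calc (coeff (ee 1 0 0 m) p + coeff (ee 0 1 1 (m - 1)) p) •
          Ideal.Quotient.mk (relIdeal K m) (X 0 * X 3 ^ m)
        = Ideal.Quotient.mk (relIdeal K m)
            (monomial (ee 1 0 0 m) (coeff (ee 1 0 0 m) p + coeff (ee 0 1 1 (m - 1)) p)) := by
          rw [← Ideal.Quotient.mkₐ_eq_mk (R₁ := K), ← map_smul]
          congr 1
          rw [smul_eq_C_mul, X0X3m_eq, mon, C_mul_monomial, mul_one]
      _ = Ideal.Quotient.mk (relIdeal K m) p := h0.symm
  · intro hx s hs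
    rw [Submodule.mem_span_singleton] at hx
    obtain ⟨a, rfl⟩ := hx
    have hv : ∀ s ∈ Ideal.span {Ideal.Quotient.mk (relIdeal K m) (X 0),
        Ideal.Quotient.mk (relIdeal K m) (X 1), Ideal.Quotient.mk (relIdeal K m) (X 2),
        Ideal.Quotient.mk (relIdeal K m) (X 3)},
        Ideal.Quotient.mk (relIdeal K m) (X 0 * X 3 ^ m) * s = 0 := by
      intro s hs
      refine Submodule.span_induction ?_ ?_ ?_ ?_ hs
      · rintro y hy
        simp only [Set.mem_insert_iff, Set.mem_singleton_iff] at hy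
        rcases hy with rfl | rfl | rfl | rfl
        · rw [← map_mul, Ideal.Quotient.eq_zero_iff_mem]; exact v_mul_gen hm 0
        · rw [← map_mul, Ideal.Quotient.eq_zero_iff_mem]; exact v_mul_gen hm 1
        · rw [← map_mul, Ideal.Quotient.eq_zero_iff_mem]; exact v_mul_gen hm 2
        · rw [← map_mul, Ideal.Quotient.eq_zero_iff_mem]; exact v_mul_gen hm 3
      · exact mul_zero _
      · intro y z _ _ hy hz
        rw [mul_add, hy, hz, add_zero]
      · intro a' y _ hy
        rw [smul_eq_mul, ← mul_assoc,
          mul_comm (Ideal.Quotient.mk (relIdeal K m) (X 0 * X 3 ^ m)) a', mul_assoc, hy, mul_zero]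
    rw [smul_mul_assoc, hv s hs, smul_zero]

end Stmt17Aux

set_option synthInstance.maxHeartbeats 1000000 in
set_option maxHeartbeats 1000000 in
/-- `R` is local Artinian with maximal ideal `(x1,x2,x3,x4)` (it is the unique
maximal ideal), and its socle is one-dimensional, spanned over `K` by `x1x4^m`;
in particular `R` is Gorenstein. -/
theorem stmt17 (K : Type*) [Field K] [CharZero K] (m : ℕ) (hm : 1 ≤ m) :
    let π := Ideal.Quotient.mk (relIdeal K m)
    let mx : Ideal (MvPolynomial (Fin 4) K ⧸ relIdeal K m) :=
      Ideal.span {π (X 0), π (X 1), π (X 2), π (X 3)}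
    IsArtinianRing (MvPolynomial (Fin 4) K ⧸ relIdeal K m) ∧
    mx.IsMaximal ∧
    (∀ I : Ideal (MvPolynomial (Fin 4) K ⧸ relIdeal K m), I.IsMaximal → I = mx) ∧
    π (X 0 * X 3 ^ m) ≠ 0 ∧
    {r : MvPolynomial (Fin 4) K ⧸ relIdeal K m | ∀ s ∈ mx, r * s = 0} =
      (Submodule.span K {π (X 0 * X 3 ^ m)} :
        Submodule K (MvPolynomial (Fin 4) K ⧸ relIdeal K m)) := by
  intro π mx
  exact ⟨Stmt17Aux.quotient_artinian hm, Stmt17Aux.mx_maximal,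
    fun I hI => Stmt17Aux.mx_unique I hI, Stmt17Aux.x0x3m_ne_zero hm, Stmt17Aux.socle_eq hm⟩
end

section
/- Let A be the 7×7 0-1 matrix with a_{i,j} = 1 for i ∈ {1,2,3,4}, j ∈ {1,2,3,5,6}; a_{i,7} = 1 for i ∈ {2,3,4}; a_{i,4} = 1 for i ∈ {5,6,7}; and 0 otherwise. Let 𝟙 be the all-ones row vector and B = (1,1,1,1,0,0,0)ᵀ. Then for all k ≥ 0, the number 𝟙·A^k·B equals the coefficient β_{k+1} in the expansion of (1+z)/(1 − 3z − 3z² + z³) = Σ_k β_k z^k; equivalently, the sequence c_k := 𝟙 A^k B satisfies c₀ = 4, c₁ = 15, and c_k = 3c_{k−1} + 3c_{k−2} − c_{k−3} for k ≥ 3 with c₂ = 3c₁ + 3c₀ − 1 = 56. -/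
/-- The 0-1 transfer matrix pattern (0-indexed): rows 0–3 have 1's in columns
0,1,2,4,5; rows 1,2,3 also in column 6; rows 4,5,6 have a 1 only in column 3. -/
def apat (i j : Fin 7) : ℚ :=
  if (i : ℕ) ≤ 3 ∧ ((j : ℕ) ≤ 2 ∨ (j : ℕ) = 4 ∨ (j : ℕ) = 5) then 1
  else if 1 ≤ (i : ℕ) ∧ (i : ℕ) ≤ 3 ∧ (j : ℕ) = 6 then 1
  else if 4 ≤ (i : ℕ) ∧ (j : ℕ) = 3 then 1 else 0

def AmatQ : Matrix (Fin 7) (Fin 7) ℚ := Matrix.of apat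

def Bvec : Fin 7 → ℚ := ![1, 1, 1, 1, 0, 0, 0]

/-- `𝟙 · A^k · B`. -/
def walk (k : ℕ) : ℚ := ∑ i, (AmatQ ^ k).mulVec Bvec i

lemma hA : AmatQ = !![1,1,1,0,1,1,0; 1,1,1,0,1,1,1; 1,1,1,0,1,1,1; 1,1,1,0,1,1,1;
    0,0,0,1,0,0,0; 0,0,0,1,0,0,0; 0,0,0,1,0,0,0] := by
  ext i j
  fin_cases i <;> fin_cases j <;> decide

set_option maxHeartbeats 2000000 in
lemma rowlemma (v : Fin 7 → ℚ) :
    ∑ i, ((AmatQ ^ 3).mulVec v) i =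
      3 * ∑ i, ((AmatQ ^ 2).mulVec v) i + 3 * ∑ i, (AmatQ.mulVec v) i - ∑ i, v i := by
  simp only [pow_succ, pow_zero, Matrix.one_mul, hA, Matrix.mulVec, Matrix.mul_apply,
    dotProduct, Fin.sum_univ_succ, Fin.sum_univ_zero, Matrix.cons_val_zero,
    Matrix.cons_val_succ, Fin.succ_zero_eq_one, Matrix.cons_val_one, Matrix.head_cons,
    Matrix.of_apply, Matrix.vecHead, Matrix.vecTail, Matrix.head_cons, Matrix.tail_cons, Function.comp, add_zero]
  ring

lemma walkrec (k : ℕ) :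
    walk (k + 3) = 3 * walk (k + 2) + 3 * walk (k + 1) - walk k := by
  have h : ∀ m : ℕ, walk (k + m) = ∑ i, ((AmatQ ^ m).mulVec ((AmatQ ^ k).mulVec Bvec)) i := by
    intro m
    simp [walk, add_comm k m, pow_add, Matrix.mulVec_mulVec]
  rw [h 3, h 2, h 1, pow_one]
  have h0 : walk k = ∑ i, ((AmatQ ^ k).mulVec Bvec) i := rfl
  rw [h0, rowlemma]

lemma walk0 : walk 0 = 4 := by
  simp [walk, Bvec, Fin.sum_univ_succ]
  norm_num

lemma walk1 : walk 1 = 15 := by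
  rw [walk, pow_one]
  simp only [hA, Bvec, Matrix.mulVec, dotProduct, Fin.sum_univ_succ,
    Fin.sum_univ_zero, Matrix.cons_val_zero, Matrix.cons_val_succ, Matrix.vecHead, Matrix.vecTail, Matrix.head_cons, Matrix.tail_cons, Function.comp, add_zero]
  simp [Matrix.vecHead, Matrix.vecTail]; norm_num

set_option maxHeartbeats 1000000 in
lemma walk2 : walk 2 = 56 := by
  rw [walk]
  simp only [pow_succ, pow_zero, Matrix.one_mul, hA, Bvec, Matrix.mulVec,
    Matrix.mul_apply, dotProduct, Fin.sum_univ_succ, Fin.sum_univ_zero,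
    Matrix.cons_val_zero, Matrix.cons_val_succ, add_zero]
  simp [Matrix.vecHead, Matrix.vecTail]; norm_num

open PowerSeries

noncomputable def gser : PowerSeries ℚ :=
  1 - 3 * PowerSeries.X - 3 * PowerSeries.X ^ 2 + PowerSeries.X ^ 3

noncomputable def Fser : PowerSeries ℚ := (1 + PowerSeries.X) * gser⁻¹

lemma hgF : gser * Fser = 1 + PowerSeries.X := by
  rw [Fser, mul_left_comm, PowerSeries.mul_inv_cancel, mul_one]
  rw [gser]
  simp

lemma coeff_X_mul_ite (n : ℕ) (φ : PowerSeries ℚ) :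
    PowerSeries.coeff (R := ℚ) n (PowerSeries.X * φ) =
      if 1 ≤ n then PowerSeries.coeff (R := ℚ) (n - 1) φ else 0 := by
  cases n with
  | zero => simp
  | succ m => simp [PowerSeries.coeff_succ_X_mul]

lemma coeff_g (n : ℕ) :
    PowerSeries.coeff (R := ℚ) n (gser * Fser) =
      PowerSeries.coeff (R := ℚ) n Fser
        - 3 * (if 1 ≤ n then PowerSeries.coeff (R := ℚ) (n - 1) Fser else 0)
        - 3 * (if 2 ≤ n then PowerSeries.coeff (R := ℚ) (n - 2) Fser else 0)
        + (if 3 ≤ n then PowerSeries.coeff (R := ℚ) (n - 3) Fser else 0) := by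
  have h3 : (3 : PowerSeries ℚ) = PowerSeries.C (R := ℚ) 3 := (map_ofNat (PowerSeries.C (R := ℚ)) 3).symm
  rw [gser, h3, add_mul, sub_mul, sub_mul, one_mul, mul_assoc, mul_assoc,
    map_add, map_sub, map_sub, PowerSeries.coeff_C_mul, PowerSeries.coeff_C_mul,
    coeff_X_mul_ite, PowerSeries.coeff_X_pow_mul', PowerSeries.coeff_X_pow_mul']

lemma aF : ∀ n, PowerSeries.coeff (R := ℚ) n (gser * Fser) = PowerSeries.coeff (R := ℚ) n (1 + PowerSeries.X) :=
  fun n => by rw [hgF]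

lemma a0 : PowerSeries.coeff (R := ℚ) 0 Fser = 1 := by
  have := aF 0
  rw [coeff_g] at this
  simpa using this

lemma a1 : PowerSeries.coeff (R := ℚ) 1 Fser = 4 := by
  have := aF 1
  rw [coeff_g] at this
  simp [a0] at this
  linarith

lemma a2 : PowerSeries.coeff (R := ℚ) 2 Fser = 15 := by
  have := aF 2
  rw [coeff_g] at this
  simp [a0, a1, PowerSeries.coeff_one, PowerSeries.coeff_X] at this
  linarith

lemma a3 : PowerSeries.coeff (R := ℚ) 3 Fser = 56 := by
  have := aF 3
  rw [coeff_g] at this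
  simp [a0, a1, a2, PowerSeries.coeff_one, PowerSeries.coeff_X] at this
  linarith

lemma arec (k : ℕ) :
    PowerSeries.coeff (R := ℚ) (k + 4) Fser =
      3 * PowerSeries.coeff (R := ℚ) (k + 3) Fser + 3 * PowerSeries.coeff (R := ℚ) (k + 2) Fser
        - PowerSeries.coeff (R := ℚ) (k + 1) Fser := by
  have := aF (k + 4)
  rw [coeff_g] at this
  have h1 : 1 ≤ k + 4 := by omega
  have h2 : 2 ≤ k + 4 := by omega
  have h3 : 3 ≤ k + 4 := by omega
  rw [if_pos h1, if_pos h2, if_pos h3] at this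
  have e1 : k + 4 - 1 = k + 3 := by omega
  have e2 : k + 4 - 2 = k + 2 := by omega
  have e3 : k + 4 - 3 = k + 1 := by omega
  rw [e1, e2, e3] at this
  simp [PowerSeries.coeff_one, PowerSeries.coeff_X] at this
  linarith

lemma main : ∀ k : ℕ, walk k = PowerSeries.coeff (R := ℚ) (k + 1) Fser := by
  suffices h : ∀ k : ℕ, walk k = PowerSeries.coeff (R := ℚ) (k + 1) Fser ∧
      walk (k + 1) = PowerSeries.coeff (R := ℚ) (k + 2) Fser ∧
      walk (k + 2) = PowerSeries.coeff (R := ℚ) (k + 3) Fser from fun k => (h k).1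
  intro k
  induction k with
  | zero => exact ⟨by rw [walk0, a1], by rw [walk1, a2], by rw [walk2, a3]⟩
  | succ n ih =>
    refine ⟨ih.2.1, ih.2.2, ?_⟩
    have e : n + 1 + 2 = n + 3 := by ring
    have e2 : n + 1 + 3 = n + 4 := by ring
    rw [e, e2, walkrec n, arec n, ih.1, ih.2.1, ih.2.2]

/-- `𝟙·A^k·B` equals the coefficient `β_{k+1}` of `(1+z)/(1-3z-3z²+z³)`;
equivalently `c₀ = 4`, `c₁ = 15`, `c₂ = 56`, and
`c_k = 3c_{k-1} + 3c_{k-2} - c_{k-3}`. -/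
theorem stmt18 :
    (∀ k : ℕ, walk k = PowerSeries.coeff (R := ℚ) (k + 1)
      ((1 + PowerSeries.X) *
        (1 - 3 * PowerSeries.X - 3 * PowerSeries.X ^ 2 +
          PowerSeries.X ^ 3 : PowerSeries ℚ)⁻¹)) ∧
    walk 0 = 4 ∧ walk 1 = 15 ∧ walk 2 = 56 ∧
    (∀ k : ℕ, walk (k + 3) = 3 * walk (k + 2) + 3 * walk (k + 1) - walk k) := by
  exact ⟨main, walk0, walk1, walk2, walkrec⟩
end
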